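/- arXiv:2509.16537 — 6 statements merged into one kernel-verified Lean document; each statement's English description precedes it below -/
import Mathlib

section
/- Let θ̂ ∈ Θ and r ≥ 0 satisfy r ≤ θ̂_j for every j = 1,…,n, and let φ_1,…,φ_n ∈ ℝ. Then max{ ∑_{j=1}^n θ_j φ_j : θ ∈ Θ, ‖θ − θ̂‖_∞ ≤ r } = ∑_{j=1}^n (θ̂_j − r) φ_j + (n r) · inf_{d ∈ ℝ} ( d + (2/n) ∑_{j=1}^n max(φ_j − d, 0) ). In other words, writing θ^l_j := θ̂_j − r, the worst-case value equals ∑_j θ^l_j φ_j + (1 − ∑_j θ^l_j)·CVaR at confidence level 0.5 of the values φ_1,…,φ_n under the uniform distribution on {1,…,n}, where CVaR^{0.5} of a discrete random variable Z under P is inf_{d∈ℝ} ( d + 2 E_P[max(Z − d, 0)] ). -/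
open Set Filter MeasureTheory
open scoped ENNReal

noncomputable section

/-- The probability simplex Θ in ℝⁿ. -/
def simplex (n : ℕ) : Set (Fin n → ℝ) := {θ | ∑ j, θ j = 1 ∧ ∀ j, 0 ≤ θ j}

/-- Ambiguity set `𝔹∞(c, r) ∩ Θ`.  (The norm on `Fin n → ℝ` is the sup norm.) -/
def amb {n : ℕ} (c : Fin n → ℝ) (r : ℝ) : Set (Fin n → ℝ) :=
  {θ | ‖θ - c‖ ≤ r} ∩ simplex n

/-- Regularized lower-level objective `∑_j θ_j h_j(x) − λ‖θ‖²` (Euclidean norm squared). -/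
def obj {n d : ℕ} (h : Fin n → (Fin d → ℝ) → ℝ) (lam : ℝ) (x : Fin d → ℝ)
    (θ : Fin n → ℝ) : ℝ :=
  (∑ j, θ j * h j x) - lam * ∑ j, (θ j) ^ 2

/-- Optimal value `ν^λ(x, c, r)` of the regularized lower-level problem. -/
def nuval {n d : ℕ} (h : Fin n → (Fin d → ℝ) → ℝ) (lam : ℝ) (x : Fin d → ℝ)
    (c : Fin n → ℝ) (r : ℝ) : ℝ :=
  sSup (obj h lam x '' amb c r)

/-- Maximizer set `ϑ^λ(x, c, r)` of the regularized lower-level problem. -/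
def argmaxSet {n d : ℕ} (h : Fin n → (Fin d → ℝ) → ℝ) (lam : ℝ) (x : Fin d → ℝ)
    (c : Fin n → ℝ) (r : ℝ) : Set (Fin n → ℝ) :=
  {θ ∈ amb c r | obj h lam x θ = nuval h lam x c r}

/-- Normal cone of `X` at `x` (standard inner product on ℝ^d). -/
def normalCone {d : ℕ} (X : Set (Fin d → ℝ)) (x : Fin d → ℝ) : Set (Fin d → ℝ) :=
  {v | ∀ y ∈ X, ∑ i, v i * (y i - x i) ≤ 0}

/-- x-solution set `𝔛^λ(c, r)` of the (regularized) Bayesian DRVI. -/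
def solSet {n d : ℕ} (G : Fin n → (Fin d → ℝ) → Fin d → ℝ)
    (h : Fin n → (Fin d → ℝ) → ℝ) (lam : ℝ) (X : Set (Fin d → ℝ))
    (c : Fin n → ℝ) (r : ℝ) : Set (Fin d → ℝ) :=
  {x ∈ X | ∃ θ ∈ argmaxSet h lam x c r,
      ∀ y ∈ X, 0 ≤ ∑ i, (∑ j, θ j * G j x i) * (y i - x i)}

/-- One-sided deviation `𝔻(S, T)` (the metric of the Pi type is the sup metric). -/
def dev {α : Type*} [PseudoMetricSpace α] (S T : Set α) : ℝ :=
  sSup ((fun s => Metric.infDist s T) '' S)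

/-- One-sided deviation with values in `ℝ≥0∞`. -/
def devE {α : Type*} [PseudoMetricSpace α] (S T : Set α) : ℝ≥0∞ :=
  ⨆ s ∈ S, ENNReal.ofReal (Metric.infDist s T)

/-- Lower-level growth function `ψ_x^λ` at parameters `(c, r)`
(values in `[0,∞]`; the infimum over the empty set is `⊤`). -/
def psiLow {n d : ℕ} (h : Fin n → (Fin d → ℝ) → ℝ) (lam : ℝ) (x : Fin d → ℝ)
    (c : Fin n → ℝ) (r : ℝ) (τ : ℝ) : ℝ≥0∞ :=
  ⨅ θ ∈ {θ ∈ amb c r | τ ≤ Metric.infDist θ (argmaxSet h lam x c r)},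
    ENNReal.ofReal (nuval h lam x c r - obj h lam x θ)

/-- Generalized inverse `(ψ_x^λ)⁻¹(t) = sup{τ ≥ 0 : ψ_x^λ(τ) ≤ t}`. -/
def psiLowInv {n d : ℕ} (h : Fin n → (Fin d → ℝ) → ℝ) (lam : ℝ) (x : Fin d → ℝ)
    (c : Fin n → ℝ) (r : ℝ) (t : ℝ) : ℝ≥0∞ :=
  ⨆ τ ∈ {τ : ℝ | 0 ≤ τ ∧ psiLow h lam x c r τ ≤ ENNReal.ofReal t}, ENNReal.ofReal τ

/-- `Ψ_x^λ(η) = η + (ψ_x^λ)⁻¹(2η)`. -/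
def PsiLow {n d : ℕ} (h : Fin n → (Fin d → ℝ) → ℝ) (lam : ℝ) (x : Fin d → ℝ)
    (c : Fin n → ℝ) (r : ℝ) (η : ℝ) : ℝ≥0∞ :=
  ENNReal.ofReal η + psiLowInv h lam x c r (2 * η)

/-- Residual `d(0, ∑_j θ_j G_j(x) + N_X(x))` (ℓ∞ distance). -/
def resid {n d : ℕ} (G : Fin n → (Fin d → ℝ) → Fin d → ℝ) (X : Set (Fin d → ℝ))
    (x : Fin d → ℝ) (θ : Fin n → ℝ) : ℝ :=
  Metric.infDist (0 : Fin d → ℝ)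
    ((fun w => (fun i => ∑ j, θ j * G j x i) + w) '' normalCone X x)

/-- Solution-set growth function `ψ^λ_{c,r}` (values in `[0,∞]`). -/
def psiSol {n d : ℕ} (G : Fin n → (Fin d → ℝ) → Fin d → ℝ)
    (h : Fin n → (Fin d → ℝ) → ℝ) (lam : ℝ) (X : Set (Fin d → ℝ))
    (c : Fin n → ℝ) (r : ℝ) (τ : ℝ) : ℝ≥0∞ :=
  ⨅ x ∈ {x ∈ X | τ ≤ Metric.infDist x (solSet G h lam X c r)},
    ⨅ θ ∈ argmaxSet h lam x c r, ENNReal.ofReal (resid G X x θ)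

/-- Generalized inverse `(ψ^λ_{c,r})⁻¹(t) = sup{τ ≥ 0 : ψ^λ_{c,r}(τ) ≤ t}`. -/
def psiSolInv {n d : ℕ} (G : Fin n → (Fin d → ℝ) → Fin d → ℝ)
    (h : Fin n → (Fin d → ℝ) → ℝ) (lam : ℝ) (X : Set (Fin d → ℝ))
    (c : Fin n → ℝ) (r : ℝ) (t : ℝ) : ℝ≥0∞ :=
  ⨆ τ ∈ {τ : ℝ | 0 ≤ τ ∧ psiSol G h lam X c r τ ≤ ENNReal.ofReal t}, ENNReal.ofReal τ

theorem csum (n : ℕ) : ∑ k ∈ Finset.range n, min 2 (2*k + 2 - n) = n := by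
  have h := Finset.sum_range_reflect (fun k => min 2 (2*k + 2 - n)) n
  have h2 : ∑ k ∈ Finset.range n, (min 2 (2*k + 2 - n) + min 2 (2*(n - 1 - k) + 2 - n)) = 2 * n := by
    have hc : ∀ k ∈ Finset.range n, min 2 (2*k + 2 - n) + min 2 (2*(n - 1 - k) + 2 - n) = 2 := by
      intro k hk; have := Finset.mem_range.mp hk; omega
    rw [Finset.sum_congr rfl hc, Finset.sum_const, Finset.card_range, smul_eq_mul, mul_comm]
  rw [Finset.sum_add_distrib] at h2
  omega


/-- Theorem 3.2: CVaR reformulation of the worst-case lower-level objective. -/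
theorem cvar_reformulation {n : ℕ} (hn : 1 ≤ n)
    (θhat : Fin n → ℝ) (hθhat : θhat ∈ simplex n)
    (r : ℝ) (hr : 0 ≤ r) (hrθ : ∀ j, r ≤ θhat j) (φ : Fin n → ℝ) :
    sSup ((fun θ => ∑ j, θ j * φ j) '' amb θhat r)
      = (∑ j, (θhat j - r) * φ j)
        + ((n : ℝ) * r) * ⨅ dd : ℝ, (dd + (2 / (n : ℝ)) * ∑ j, max (φ j - dd) 0) := by
  obtain ⟨hθsum, hθnn⟩ := hθhat
  have hn0 : (0:ℝ) < (n:ℝ) := by exact_mod_cast hn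
  have hne : ((n:ℝ)) ≠ 0 := ne_of_gt hn0
  set f : ℝ → ℝ := fun dd => dd + (2 / (n : ℝ)) * ∑ j, max (φ j - dd) 0 with hf
  set base : ℝ := ∑ j, (θhat j - r) * φ j with hbase
  -- f is bounded below
  have hSmax : ∀ dd : ℝ, (∑ j, (φ j - dd)) ≤ 2 * ∑ j, max (φ j - dd) 0 := by
    intro dd
    rw [Finset.mul_sum]
    apply Finset.sum_le_sum
    intro j _
    rcases le_total (φ j - dd) 0 with h | h
    · rw [max_eq_right h]; linarith
    · rw [max_eq_left h]; linarith
  have hsub : ∀ dd : ℝ, (∑ j, (φ j - dd)) = (∑ j, φ j) - (n:ℝ) * dd := by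
    intro dd
    rw [Finset.sum_sub_distrib, Finset.sum_const, Finset.card_univ, Fintype.card_fin,
      nsmul_eq_mul]
  have hbddf : BddBelow (Set.range f) := by
    refine ⟨(1/(n:ℝ)) * ∑ j, φ j, ?_⟩
    rintro y ⟨dd, rfl⟩
    have h1 := hSmax dd
    rw [hsub dd] at h1
    have h2 := mul_le_mul_of_nonneg_left h1 (le_of_lt (one_div_pos.mpr hn0))
    have h3 : (1/(n:ℝ)) * ((n:ℝ) * dd) = dd := by field_simp
    have h4 : (1/(n:ℝ)) * (2 * ∑ j, max (φ j - dd) 0) = (2/(n:ℝ)) * ∑ j, max (φ j - dd) 0 := by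
      ring
    simp only [hf]
    nlinarith [h2, h3, h4]
  -- weak duality
  have hub : ∀ θ ∈ amb θhat r, ∀ dd : ℝ,
      (∑ j, θ j * φ j) ≤ base + ((n:ℝ) * r) * f dd := by
    rintro θ ⟨hnorm, hsum1, hnn⟩ dd
    have habs : ∀ j, |θ j - θhat j| ≤ r := by
      intro j
      have := (pi_norm_le_iff_of_nonneg hr).mp hnorm j
      simpa [Real.norm_eq_abs] using this
    set u : Fin n → ℝ := fun j => θ j - θhat j + r with hu
    have hu0 : ∀ j, 0 ≤ u j := by
      intro j; have := (abs_le.mp (habs j)).1; simp only [hu]; linarith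
    have hu2 : ∀ j, u j ≤ 2 * r := by
      intro j; have := (abs_le.mp (habs j)).2; simp only [hu]; linarith
    have husum : ∑ j, u j = (n:ℝ) * r := by
      simp only [hu]
      rw [Finset.sum_add_distrib, Finset.sum_sub_distrib, Finset.sum_const, Finset.card_univ,
        Fintype.card_fin, nsmul_eq_mul]
      rw [hθsum]
      have : ∑ j, θ j = 1 := hsum1
      rw [this]; ring
    have hsplit : (∑ j, θ j * φ j) = base + ∑ j, u j * φ j := by
      rw [hbase, ← Finset.sum_add_distrib]
      apply Finset.sum_congr rfl
      intro j _; simp only [hu]; ring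
    have hkey : ∑ j, u j * φ j ≤ ((n:ℝ)*r) * dd + 2*r*∑ j, max (φ j - dd) 0 := by
      have h1 : ∀ j ∈ Finset.univ, u j * φ j ≤ u j * dd + 2*r*max (φ j - dd) 0 := by
        intro j _
        have hmain : u j * (φ j - dd) ≤ 2*r*max (φ j - dd) 0 := by
          rcases le_total (φ j - dd) 0 with h | h
          · rw [max_eq_right h]
            have := mul_nonpos_of_nonneg_of_nonpos (hu0 j) h
            linarith
          · rw [max_eq_left h]
            nlinarith [hu2 j, hu0 j]
        nlinarith [hmain]
      calc ∑ j, u j * φ j ≤ ∑ j, (u j * dd + 2*r*max (φ j - dd) 0) := Finset.sum_le_sum h1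
        _ = (∑ j, u j) * dd + 2*r*∑ j, max (φ j - dd) 0 := by
            rw [Finset.sum_add_distrib, ← Finset.sum_mul, ← Finset.mul_sum]
        _ = ((n:ℝ)*r) * dd + 2*r*∑ j, max (φ j - dd) 0 := by rw [husum]
    have hfd : ((n:ℝ)*r) * f dd = ((n:ℝ)*r) * dd + 2*r*∑ j, max (φ j - dd) 0 := by
      simp only [hf]; field_simp
    rw [hsplit, hfd]; linarith
  -- construction of the maximizer
  set σ : Equiv.Perm (Fin n) := Tuple.sort φ with hσ
  set g : Fin n → ℝ := fun k => φ (σ k) with hg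
  have hmono : Monotone g := Tuple.monotone_sort φ
  set c : ℕ → ℕ := fun k => min 2 (2*k + 2 - n) with hc
  have hp : n - 1 - n/2 < n := by omega
  set p : Fin n := ⟨n - 1 - n/2, hp⟩ with hpdef
  set dstar : ℝ := g p with hds
  -- termwise key identity
  have hterm : ∀ k : Fin n, (c k : ℝ) * g k = (c k : ℝ) * dstar + 2 * max (g k - dstar) 0 := by
    intro k
    rcases lt_trichotomy (2*(k:ℕ) + 2) (n+1) with h | h | h
    · have hck : c k = 0 := by simp only [hc]; omega
      have hkp : k ≤ p := by rw [Fin.le_def]; simp only [hpdef]; omega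
      have : g k ≤ dstar := hmono hkp
      rw [hck, max_eq_right (by linarith)]
      norm_num
    · have hck : c k = 1 := by simp only [hc]; omega
      have hkp : k = p := by
        apply Fin.ext; simp only [hpdef]; omega
      rw [hck, hkp]
      simp [hds]
    · have hck : c k = 2 := by simp only [hc]; omega
      have hkp : p ≤ k := by rw [Fin.le_def]; simp only [hpdef]; omega
      have : dstar ≤ g k := hmono hkp
      rw [hck, max_eq_left (by linarith)]
      push_cast; ring
  have hcsumR : ∑ k : Fin n, (c k : ℝ) = (n : ℝ) := by
    have : ∑ k : Fin n, c k = n := by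
      rw [Fin.sum_univ_eq_sum_range]
      exact csum n
    exact_mod_cast congrArg (Nat.cast : ℕ → ℝ) this
  set θstar : Fin n → ℝ := fun j => θhat j - r + r * (c (σ.symm j) : ℝ) with hθs
  have hcb : ∀ k : ℕ, (c k : ℝ) ≤ 2 ∧ (0:ℝ) ≤ (c k : ℝ) := by
    intro k
    constructor
    · exact_mod_cast min_le_left 2 _
    · positivity
  have hmem : θstar ∈ amb θhat r := by
    refine ⟨?_, ?_, ?_⟩
    · rw [Set.mem_setOf_eq]
      rw [pi_norm_le_iff_of_nonneg hr]
      intro j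
      simp only [Pi.sub_apply, hθs, Real.norm_eq_abs]
      have h1 := (hcb (σ.symm j)).1
      have h2 := (hcb (σ.symm j)).2
      rw [abs_le]
      constructor <;> nlinarith
    · show ∑ j, θstar j = 1
      simp only [hθs]
      rw [Finset.sum_add_distrib, Finset.sum_sub_distrib, Finset.sum_const, Finset.card_univ,
        Fintype.card_fin, nsmul_eq_mul, hθsum, ← Finset.mul_sum]
      have hre : ∑ j, (c (σ.symm j) : ℝ) = (n:ℝ) := by
        rw [← hcsumR]
        have := Equiv.sum_comp σ (fun j => (c (σ.symm j) : ℝ))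
        rw [← this]
        apply Finset.sum_congr rfl
        intro k _
        rw [Equiv.symm_apply_apply]
      rw [hre]; ring
    · intro j
      have h2 := (hcb (σ.symm j)).2
      have := hrθ j
      simp only [hθs]
      nlinarith
  have hval : ∑ j, θstar j * φ j = base + ((n:ℝ)*r) * f dstar := by
    have hsplit : ∑ j, θstar j * φ j = base + r * ∑ j, (c (σ.symm j) : ℝ) * φ j := by
      rw [hbase, Finset.mul_sum, ← Finset.sum_add_distrib]
      apply Finset.sum_congr rfl
      intro j _; simp only [hθs]; ring
    have hre : ∑ j, (c (σ.symm j) : ℝ) * φ j = ∑ k : Fin n, (c (k:ℕ) : ℝ) * g k := by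
      have := Equiv.sum_comp σ (fun j => (c (σ.symm j) : ℝ) * φ j)
      rw [← this]
      apply Finset.sum_congr rfl
      intro k _
      rw [Equiv.symm_apply_apply]
    have hmaxre : ∑ k, max (g k - dstar) 0 = ∑ j, max (φ j - dstar) 0 := by
      have := Equiv.sum_comp σ (fun j => max (φ j - dstar) 0)
      rw [← this]
    have hsum2 : ∑ k : Fin n, (c (k:ℕ) : ℝ) * g k = (n:ℝ) * dstar + 2 * ∑ j, max (φ j - dstar) 0 := by
      rw [Finset.sum_congr rfl (fun k _ => hterm k), Finset.sum_add_distrib,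
        ← Finset.sum_mul, hcsumR, ← Finset.mul_sum, hmaxre]
    rw [hsplit, hre, hsum2]
    simp only [hf]
    field_simp
  -- assembling
  have hSne : ((fun θ => ∑ j, θ j * φ j) '' amb θhat r).Nonempty := by
    refine ⟨∑ j, θhat j * φ j, θhat, ⟨?_, hθsum, hθnn⟩, rfl⟩
    rw [Set.mem_setOf_eq, sub_self, norm_zero]; exact hr
  have hbddS : BddAbove ((fun θ => ∑ j, θ j * φ j) '' amb θhat r) := by
    refine ⟨base + ((n:ℝ)*r) * f dstar, ?_⟩
    rintro y ⟨θ, hθ, rfl⟩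
    exact hub θ hθ dstar
  apply le_antisymm
  · apply csSup_le hSne
    rintro y ⟨θ, hθ, rfl⟩
    rcases eq_or_lt_of_le hr with hr0 | hrpos
    · have := hub θ hθ 0
      rw [← hr0] at this ⊢
      simpa using this
    · have hnr : (0:ℝ) < (n:ℝ)*r := by positivity
      have hdiv : ∀ dd : ℝ, ((∑ j, θ j * φ j) - base) / ((n:ℝ)*r) ≤ f dd := by
        intro dd
        rw [div_le_iff₀ hnr]
        have := hub θ hθ dd
        linarith [this]
      have hI := le_ciInf hdiv
      rw [div_le_iff₀ hnr] at hI
      linarith [hI]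
  · have h1 : (⨅ dd : ℝ, f dd) ≤ f dstar := ciInf_le hbddf dstar
    have h2 : base + ((n:ℝ)*r) * (⨅ dd : ℝ, f dd) ≤ base + ((n:ℝ)*r) * f dstar := by
      have hnr : (0:ℝ) ≤ (n:ℝ)*r := by positivity
      nlinarith
    rw [← hval] at h2
    exact h2.trans (le_csSup hbddS ⟨θstar, hmem, rfl⟩)
end
end

section
/- Suppose each h_j is Lipschitz continuous on 𝒳 with modulus L_j > 0 and |h_j(x)| ≤ M for all x ∈ 𝒳 and j = 1,…,n. Then for all x, y ∈ 𝒳, θ̂, θ̃ ∈ Θ and r̂, r̃ ∈ [0,1], |ν(x, θ̂, r̂) − ν(y, θ̃, r̃)| ≤ (max_{1≤j≤n} L_j)·‖x − y‖ + n M (‖θ̂ − θ̃‖_∞ + |r̂ − r̃|). In particular, the optimal value function ν is Lipschitz continuous on 𝒳 × Θ × [0,1]. -/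
open Set Filter MeasureTheory
open scoped ENNReal

noncomputable section

lemma amb_transfer {n : ℕ} {c₁ c₂ : Fin n → ℝ} (hc₂ : c₂ ∈ simplex n)
    {r₁ r₂ : ℝ} (hr₂ : 0 ≤ r₂)
    {θ : Fin n → ℝ} (hθ : θ ∈ amb c₁ r₁) :
    ∃ θ' ∈ amb c₂ r₂, ‖θ - θ'‖ ≤ ‖c₁ - c₂‖ + |r₁ - r₂| := by
  obtain ⟨hθb, hθs⟩ := hθ
  have hθb' : ‖θ - c₁‖ ≤ r₁ := hθb
  set s := r₁ + ‖c₁ - c₂‖ with hs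
  have hθc₂ : ‖θ - c₂‖ ≤ s := by
    calc ‖θ - c₂‖ ≤ ‖θ - c₁‖ + ‖c₁ - c₂‖ := norm_sub_le_norm_sub_add_norm_sub _ _ _
      _ ≤ s := by linarith
  by_cases hcase : s ≤ r₂
  · refine ⟨θ, ⟨le_trans hθc₂ hcase, hθs⟩, ?_⟩
    simp only [sub_self, norm_zero]
    exact add_nonneg (norm_nonneg _) (abs_nonneg _)
  · push_neg at hcase
    have hs0 : 0 < s := lt_of_le_of_lt hr₂ hcase
    set t : ℝ := 1 - r₂ / s with ht
    have ht0 : 0 ≤ t := by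
      have : r₂ / s ≤ 1 := (div_le_one hs0).2 hcase.le
      simp only [ht]; linarith
    have ht1 : t ≤ 1 := by
      have : 0 ≤ r₂ / s := div_nonneg hr₂ hs0.le
      simp only [ht]; linarith
    refine ⟨θ + t • (c₂ - θ), ⟨?_, ?_, ?_⟩, ?_⟩
    · show ‖θ + t • (c₂ - θ) - c₂‖ ≤ r₂
      have heq : θ + t • (c₂ - θ) - c₂ = (1 - t) • (θ - c₂) := by
        funext i
        simp only [Pi.add_apply, Pi.sub_apply, Pi.smul_apply, smul_eq_mul]
        ring
      rw [heq, norm_smul, Real.norm_eq_abs, abs_of_nonneg (by linarith : (0:ℝ) ≤ 1 - t)]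
      have h1t : 1 - t = r₂ / s := by simp only [ht]; ring
      rw [h1t]
      calc r₂ / s * ‖θ - c₂‖ ≤ r₂ / s * s :=
            mul_le_mul_of_nonneg_left hθc₂ (div_nonneg hr₂ hs0.le)
        _ = r₂ := div_mul_cancel₀ _ hs0.ne'
    · show ∑ j, (θ + t • (c₂ - θ)) j = 1
      have : ∀ j, (θ + t • (c₂ - θ)) j = θ j + t * (c₂ j - θ j) := fun j => rfl
      simp only [this]
      rw [Finset.sum_add_distrib, ← Finset.mul_sum, Finset.sum_sub_distrib,
        hθs.1, hc₂.1]
      ring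
    · intro j
      show 0 ≤ θ j + t * (c₂ j - θ j)
      nlinarith [hθs.2 j, hc₂.2 j, mul_nonneg ht0 (hc₂.2 j),
        mul_nonneg (by linarith : (0:ℝ) ≤ 1 - t) (hθs.2 j)]
    · have heq : θ - (θ + t • (c₂ - θ)) = t • (θ - c₂) := by
        funext i
        simp only [Pi.add_apply, Pi.sub_apply, Pi.smul_apply, smul_eq_mul]
        ring
      rw [heq, norm_smul, Real.norm_eq_abs, abs_of_nonneg ht0]
      have hts : t * s = s - r₂ := by
        simp only [ht]; field_simp
      calc t * ‖θ - c₂‖ ≤ t * s := mul_le_mul_of_nonneg_left hθc₂ ht0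
        _ = s - r₂ := hts
        _ = ‖c₁ - c₂‖ + (r₁ - r₂) := by simp only [hs]; ring
        _ ≤ ‖c₁ - c₂‖ + |r₁ - r₂| := by linarith [le_abs_self (r₁ - r₂)]

lemma sum_le_M {n d : ℕ} (h : Fin n → (Fin d → ℝ) → ℝ) (M : ℝ)
    (y : Fin d → ℝ) (hMy : ∀ j, |h j y| ≤ M)
    {θ : Fin n → ℝ} (hθ : θ ∈ simplex n) :
    ∑ j, θ j * h j y ≤ M := by
  calc ∑ j, θ j * h j y ≤ ∑ j, θ j * M := by
        refine Finset.sum_le_sum fun j _ => ?_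
        exact mul_le_mul_of_nonneg_left (le_trans (le_abs_self _) (hMy j)) (hθ.2 j)
    _ = M := by rw [← Finset.sum_mul, hθ.1, one_mul]

lemma nu_le_aux {n d : ℕ} (hn : 1 ≤ n)
    (X : Set (Fin d → ℝ)) (hXne : X.Nonempty)
    (h : Fin n → (Fin d → ℝ) → ℝ) (L : Fin n → ℝ) (M : ℝ)
    (hLip : ∀ j, ∀ x ∈ X, ∀ y ∈ X,
      |h j x - h j y| ≤ L j * Real.sqrt (∑ i, (x i - y i) ^ 2))
    (hM : ∀ j, ∀ x ∈ X, |h j x| ≤ M) :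
    ∀ x ∈ X, ∀ y ∈ X, ∀ c₁ ∈ simplex n, ∀ c₂ ∈ simplex n,
      ∀ r₁ ∈ Set.Icc (0 : ℝ) 1, ∀ r₂ ∈ Set.Icc (0 : ℝ) 1,
      nuval h 0 x c₁ r₁ ≤ nuval h 0 y c₂ r₂
        + (⨆ j, L j) * Real.sqrt (∑ i, (x i - y i) ^ 2)
        + (n : ℝ) * M * (‖c₁ - c₂‖ + |r₁ - r₂|) := by
  intro x hx y hy c₁ hc₁ c₂ hc₂ r₁ hr₁ r₂ hr₂
  have hM0 : 0 ≤ M := by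
    obtain ⟨x₀, hx₀⟩ := hXne
    exact le_trans (abs_nonneg _) (hM ⟨0, hn⟩ x₀ hx₀)
  set D := Real.sqrt (∑ i, (x i - y i) ^ 2) with hD
  have hD0 : 0 ≤ D := Real.sqrt_nonneg _
  set δ := ‖c₁ - c₂‖ + |r₁ - r₂| with hδ
  have hδ0 : 0 ≤ δ := add_nonneg (norm_nonneg _) (abs_nonneg _)
  -- obj at lam = 0
  have hobj : ∀ z θ, obj h 0 z θ = ∑ j, θ j * h j z := by
    intro z θ; simp [obj]
  -- bddAbove of the image at (y, c₂, r₂)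
  have hbdd : BddAbove (obj h 0 y '' amb c₂ r₂) := by
    refine ⟨M, ?_⟩
    rintro _ ⟨θ, hθ, rfl⟩
    rw [hobj]
    exact sum_le_M h M y (fun j => hM j y hy) hθ.2
  -- nonempty of amb c₁ r₁
  have hne : (amb c₁ r₁).Nonempty := ⟨c₁, by
    constructor
    · show ‖c₁ - c₁‖ ≤ r₁; simp [hr₁.1]
    · exact hc₁⟩
  rw [nuval]
  apply csSup_le (hne.image _)
  rintro _ ⟨θ, hθ, rfl⟩
  rw [hobj]
  obtain ⟨θ', hθ', hclose⟩ := amb_transfer hc₂ hr₂.1 hθ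
  -- step 1: change x to y
  have step1 : ∑ j, θ j * h j x ≤ ∑ j, θ j * h j y + (⨆ j, L j) * D := by
    have : ∑ j, θ j * h j x - ∑ j, θ j * h j y ≤ (⨆ j, L j) * D := by
      rw [← Finset.sum_sub_distrib]
      calc ∑ j, (θ j * h j x - θ j * h j y)
          = ∑ j, θ j * (h j x - h j y) := by
            refine Finset.sum_congr rfl fun j _ => ?_; ring
        _ ≤ ∑ j, θ j * ((⨆ j, L j) * D) := by
            refine Finset.sum_le_sum fun j _ => ?_
            refine mul_le_mul_of_nonneg_left ?_ (hθ.2.2 j)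
            calc h j x - h j y ≤ |h j x - h j y| := le_abs_self _
              _ ≤ L j * D := hLip j x hx y hy
              _ ≤ (⨆ j, L j) * D :=
                  mul_le_mul_of_nonneg_right
                    (le_ciSup (Set.Finite.bddAbove (Set.finite_range L)) j) hD0
        _ = (⨆ j, L j) * D := by rw [← Finset.sum_mul, hθ.2.1, one_mul]
    linarith
  -- step 2: change θ to θ'
  have step2 : ∑ j, θ j * h j y ≤ ∑ j, θ' j * h j y + (n : ℝ) * M * δ := by
    have hjb : ∀ j, |θ j - θ' j| ≤ δ := by
      intro j
      calc |θ j - θ' j| = ‖(θ - θ') j‖ := by simp [Real.norm_eq_abs]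
        _ ≤ ‖θ - θ'‖ := norm_le_pi_norm (θ - θ') j
        _ ≤ δ := hclose
    have : ∑ j, θ j * h j y - ∑ j, θ' j * h j y ≤ (n : ℝ) * (M * δ) := by
      rw [← Finset.sum_sub_distrib]
      calc ∑ j, (θ j * h j y - θ' j * h j y)
          = ∑ j, (θ j - θ' j) * h j y := by
            refine Finset.sum_congr rfl fun j _ => ?_; ring
        _ ≤ ∑ _j : Fin n, M * δ := by
            refine Finset.sum_le_sum fun j _ => ?_
            calc (θ j - θ' j) * h j y ≤ |(θ j - θ' j) * h j y| := le_abs_self _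
              _ = |θ j - θ' j| * |h j y| := abs_mul _ _
              _ ≤ δ * M := mul_le_mul (hjb j) (hM j y hy) (abs_nonneg _) hδ0
              _ = M * δ := mul_comm _ _
        _ = (n : ℝ) * (M * δ) := by
            rw [Finset.sum_const, Finset.card_univ, Fintype.card_fin, nsmul_eq_mul]
    linarith
  -- step 3: θ' is feasible for (c₂, r₂)
  have step3 : ∑ j, θ' j * h j y ≤ nuval h 0 y c₂ r₂ := by
    rw [nuval, ← hobj]
    exact le_csSup hbdd ⟨θ', hθ', rfl⟩
  linarith

/-- Lemma 3.3: Lipschitz continuity of the optimal value function ν. -/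
theorem nu_lipschitz {n d : ℕ} (hn : 1 ≤ n) (hd : 1 ≤ d)
    (X : Set (Fin d → ℝ)) (hXne : X.Nonempty) (hXcomp : IsCompact X) (hXconv : Convex ℝ X)
    (h : Fin n → (Fin d → ℝ) → ℝ) (L : Fin n → ℝ) (M : ℝ)
    (hL : ∀ j, 0 < L j)
    (hLip : ∀ j, ∀ x ∈ X, ∀ y ∈ X,
      |h j x - h j y| ≤ L j * Real.sqrt (∑ i, (x i - y i) ^ 2))
    (hM : ∀ j, ∀ x ∈ X, |h j x| ≤ M) :
    ∀ x ∈ X, ∀ y ∈ X, ∀ θh ∈ simplex n, ∀ θt ∈ simplex n,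
      ∀ rh ∈ Set.Icc (0 : ℝ) 1, ∀ rt ∈ Set.Icc (0 : ℝ) 1,
      |nuval h 0 x θh rh - nuval h 0 y θt rt|
        ≤ (⨆ j, L j) * Real.sqrt (∑ i, (x i - y i) ^ 2)
          + (n : ℝ) * M * (‖θh - θt‖ + |rh - rt|) := by
  intro x hx y hy θh hθh θt hθt rh hrh rt hrt
  have h1 := nu_le_aux hn X hXne h L M hLip hM x hx y hy θh hθh θt hθt rh hrh rt hrt
  have h2 := nu_le_aux hn X hXne h L M hLip hM y hy x hx θt hθt θh hθh rt hrt rh hrh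
  have hsym : ∑ i, (y i - x i) ^ 2 = ∑ i, (x i - y i) ^ 2 :=
    Finset.sum_congr rfl fun i _ => by ring
  rw [hsym, norm_sub_rev θt θh, abs_sub_comm rt rh] at h2
  rw [abs_sub_le_iff]
  constructor <;> linarith
end
end

section
/- Suppose each G_j : 𝒳 → ℝ^d and each h_j : 𝒳 → ℝ is Lipschitz continuous on 𝒳. Fix θ̂ ∈ Θ and r ∈ [0,1]. Then 𝔻(𝔛^λ(θ̂, r), 𝔛(θ̂, r)) → 0 as λ ↓ 0; that is, for every ε > 0 there exists λ₀ > 0 such that for all λ ∈ (0, λ₀] and every x ∈ 𝔛^λ(θ̂, r), d(x, 𝔛(θ̂, r)) ≤ ε. -/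
open Set Filter MeasureTheory
open scoped ENNReal

noncomputable section

section AuxMine

lemma simplex_isCompact' (n : ℕ) : IsCompact (simplex n) := by
  have hclosed : IsClosed (simplex n) := by
    have h1 : IsClosed {θ : Fin n → ℝ | ∑ j, θ j = 1} :=
      isClosed_eq (by continuity) continuous_const
    have h2 : IsClosed {θ : Fin n → ℝ | ∀ j, 0 ≤ θ j} := by
      have he : {θ : Fin n → ℝ | ∀ j, 0 ≤ θ j} = ⋂ j, {θ | 0 ≤ θ j} := by ext; simp
      rw [he]
      exact isClosed_iInter fun j => isClosed_le continuous_const (continuous_apply j)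
    exact h1.inter h2
  have hsub : simplex n ⊆ Metric.closedBall 0 1 := by
    rintro θ ⟨hsum, hpos⟩
    rw [Metric.mem_closedBall, dist_zero_right]
    refine (pi_norm_le_iff_of_nonneg zero_le_one).2 fun i => ?_
    rw [Real.norm_eq_abs, abs_le]
    refine ⟨by linarith [hpos i], ?_⟩
    calc θ i ≤ ∑ j, θ j := Finset.single_le_sum (fun j _ => hpos j) (Finset.mem_univ i)
      _ = 1 := hsum
  exact (isCompact_closedBall 0 1).of_isClosed_subset hclosed hsub

lemma amb_isCompact' {n : ℕ} (c : Fin n → ℝ) (r : ℝ) : IsCompact (amb c r) := by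
  have hb : IsClosed {θ : Fin n → ℝ | ‖θ - c‖ ≤ r} :=
    isClosed_le (by continuity) continuous_const
  exact (simplex_isCompact' n).inter_left hb

lemma obj_continuous_theta' {n d : ℕ} (h : Fin n → (Fin d → ℝ) → ℝ) (lam : ℝ) (x : Fin d → ℝ) :
    Continuous (obj h lam x) := by
  unfold obj
  exact ((continuous_finset_sum _ fun j _ => (continuous_apply j).mul continuous_const).sub
    (continuous_const.mul (continuous_finset_sum _ fun j _ => (continuous_apply j).pow 2)))

lemma obj_eq_nuval_iff' {n d : ℕ} (h : Fin n → (Fin d → ℝ) → ℝ) (lam : ℝ) (x : Fin d → ℝ)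
    (c : Fin n → ℝ) (r : ℝ) (hne : (amb c r).Nonempty) {θ : Fin n → ℝ} (hθ : θ ∈ amb c r) :
    obj h lam x θ = nuval h lam x c r ↔ ∀ θ' ∈ amb c r, obj h lam x θ' ≤ obj h lam x θ := by
  have hbdd : BddAbove (obj h lam x '' amb c r) :=
    ((amb_isCompact' c r).image (obj_continuous_theta' h lam x)).bddAbove
  unfold nuval
  constructor
  · intro heq θ' hθ'
    rw [heq]; exact le_csSup hbdd (Set.mem_image_of_mem _ hθ')
  · intro hall
    refine le_antisymm (le_csSup hbdd (Set.mem_image_of_mem _ hθ)) ?_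
    exact csSup_le (hne.image _) (by rintro b ⟨θ', hθ', rfl⟩; exact hall θ' hθ')

end AuxMine

/-- Theorem 3.7: convergence of the regularized x-solution set to the unregularized one
as the regularization parameter vanishes. -/
theorem reg_solSet_convergence {n d : ℕ} (hn : 1 ≤ n) (hd : 1 ≤ d)
    (X : Set (Fin d → ℝ)) (hXne : X.Nonempty) (hXcomp : IsCompact X) (hXconv : Convex ℝ X)
    (G : Fin n → (Fin d → ℝ) → Fin d → ℝ) (h : Fin n → (Fin d → ℝ) → ℝ)
    (hGLip : ∀ j, ∃ LG : ℝ, ∀ x ∈ X, ∀ y ∈ X, ‖G j x - G j y‖ ≤ LG * ‖x - y‖)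
    (hhLip : ∀ j, ∃ Lh : ℝ, ∀ x ∈ X, ∀ y ∈ X, |h j x - h j y| ≤ Lh * ‖x - y‖)
    (θhat : Fin n → ℝ) (hθhat : θhat ∈ simplex n)
    (r : ℝ) (hr : r ∈ Set.Icc (0 : ℝ) 1) :
    ∀ ε : ℝ, 0 < ε → ∃ lam0 : ℝ, 0 < lam0 ∧ ∀ lam : ℝ, 0 < lam → lam ≤ lam0 →
      ∀ x ∈ solSet G h lam X θhat r,
        Metric.infDist x (solSet G h 0 X θhat r) ≤ ε := by
  intro ε hε
  have hAcomp : IsCompact (amb θhat r) := amb_isCompact' θhat r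
  have hAne : (amb θhat r).Nonempty :=
    ⟨θhat, ⟨by rw [Set.mem_setOf_eq, sub_self, norm_zero]; exact hr.1, hθhat⟩⟩
  set S0 : Set (Fin d → ℝ) := solSet G h 0 X θhat r with hS0_def
  have hhc : ∀ j, ContinuousOn (h j) X := by
    intro j
    obtain ⟨L, hL⟩ := hhLip j
    have hlip : LipschitzOnWith (Real.toNNReal L) (h j) X := by
      rw [lipschitzOnWith_iff_dist_le_mul]
      intro x hx y hy
      rw [Real.dist_eq, dist_eq_norm]
      calc |h j x - h j y| ≤ L * ‖x - y‖ := hL x hx y hy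
        _ ≤ Real.toNNReal L * ‖x - y‖ :=
          mul_le_mul_of_nonneg_right (Real.le_coe_toNNReal L) (norm_nonneg _)
    exact hlip.continuousOn
  have hGic : ∀ j i, ContinuousOn (fun x => G j x i) X := by
    intro j i
    obtain ⟨L, hL⟩ := hGLip j
    have hlip : LipschitzOnWith (Real.toNNReal L) (G j) X := by
      rw [lipschitzOnWith_iff_dist_le_mul]
      intro x hx y hy
      rw [dist_eq_norm, dist_eq_norm]
      calc ‖G j x - G j y‖ ≤ L * ‖x - y‖ := hL x hx y hy
        _ ≤ Real.toNNReal L * ‖x - y‖ :=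
          mul_le_mul_of_nonneg_right (Real.le_coe_toNNReal L) (norm_nonneg _)
    exact (continuous_apply i).comp_continuousOn hlip.continuousOn
  set K₀ : Set (ℝ × (Fin d → ℝ) × (Fin n → ℝ)) := Set.Icc (0:ℝ) 1 ×ˢ X ×ˢ amb θhat r with hK₀_def
  have hK₀comp : IsCompact K₀ := isCompact_Icc.prod (hXcomp.prod hAcomp)
  haveI : CompactSpace ↥K₀ := isCompact_iff_compactSpace.mp hK₀comp
  have hxmem : ∀ q : ↥K₀, q.val.2.1 ∈ X := fun q => q.2.2.1
  have hxcont : Continuous (fun q : ↥K₀ => q.val.2.1) := by fun_prop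
  have hlamcont : Continuous (fun q : ↥K₀ => q.val.1) := by fun_prop
  have hθcont : Continuous (fun q : ↥K₀ => q.val.2.2) := by fun_prop
  have hhq : ∀ j, Continuous (fun q : ↥K₀ => h j (q.val.2.1)) := fun j =>
    (hhc j).comp_continuous hxcont hxmem
  have hGq : ∀ j i, Continuous (fun q : ↥K₀ => G j (q.val.2.1) i) := fun j i =>
    (hGic j i).comp_continuous hxcont hxmem
  have hobjq : ∀ θ' : Fin n → ℝ, Continuous (fun q : ↥K₀ => obj h q.val.1 q.val.2.1 θ') := by
    intro θ'
    unfold obj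
    exact (continuous_finset_sum _ fun j _ => continuous_const.mul (hhq j)).sub
      (hlamcont.mul continuous_const)
  have hobjq' : Continuous (fun q : ↥K₀ => obj h q.val.1 q.val.2.1 q.val.2.2) := by
    unfold obj
    refine Continuous.sub ?_ ?_
    · exact continuous_finset_sum _ fun j _ =>
        ((continuous_apply j).comp hθcont).mul (hhq j)
    · exact hlamcont.mul (continuous_finset_sum _ fun j _ =>
        ((continuous_apply j).comp hθcont).pow 2)
  set CQ : Set ↥K₀ :=
    {q | (∀ θ' ∈ amb θhat r, obj h q.val.1 q.val.2.1 θ' ≤ obj h q.val.1 q.val.2.1 q.val.2.2) ∧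
         (∀ y ∈ X, 0 ≤ ∑ i, (∑ j, q.val.2.2 j * G j q.val.2.1 i) * (y i - q.val.2.1 i)) ∧
         ε ≤ Metric.infDist q.val.2.1 S0} with hCQ_def
  have hCQclosed : IsClosed CQ := by
    have e : CQ = (⋂ θ' ∈ amb θhat r,
          {q : ↥K₀ | obj h q.val.1 q.val.2.1 θ' ≤ obj h q.val.1 q.val.2.1 q.val.2.2}) ∩
        ((⋂ y ∈ X, {q : ↥K₀ |
            0 ≤ ∑ i, (∑ j, q.val.2.2 j * G j q.val.2.1 i) * (y i - q.val.2.1 i)}) ∩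
         {q : ↥K₀ | ε ≤ Metric.infDist q.val.2.1 S0}) := by
      ext q
      simp only [hCQ_def, Set.mem_setOf_eq, Set.mem_inter_iff, Set.mem_iInter]
    rw [e]
    refine IsClosed.inter ?_ (IsClosed.inter ?_ ?_)
    · exact isClosed_biInter fun θ' _ => isClosed_le (hobjq θ') hobjq'
    · refine isClosed_biInter fun y _ => isClosed_le continuous_const ?_
      exact continuous_finset_sum _ fun i _ =>
        ((continuous_finset_sum _ fun j _ => ((continuous_apply j).comp hθcont).mul (hGq j i))).mul
          (continuous_const.sub ((continuous_apply i).comp hxcont))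
    · exact isClosed_le continuous_const ((Metric.continuous_infDist_pt S0).comp hxcont)
  set K : Set (ℝ × (Fin d → ℝ) × (Fin n → ℝ)) := Subtype.val '' CQ with hK_def
  have hKcomp : IsCompact K := hCQclosed.isCompact.image continuous_subtype_val
  set T : Set ℝ := Prod.fst '' K with hT_def
  have hTcomp : IsCompact T := hKcomp.image continuous_fst
  have hTsub : T ⊆ Set.Icc 0 1 := by
    rintro t ⟨p, ⟨q, hq, rfl⟩, rfl⟩; exact q.2.1
  have hT0 : (0:ℝ) ∉ T := by
    rintro ⟨p, ⟨q, hq, rfl⟩, h0⟩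
    obtain ⟨hmax, hVI, hdist⟩ := hq
    rw [h0] at hmax
    have hx0 : q.val.2.1 ∈ S0 := by
      refine ⟨hxmem q, q.val.2.2, ⟨q.2.2.2, ?_⟩, hVI⟩
      exact (obj_eq_nuval_iff' h 0 q.val.2.1 θhat r hAne q.2.2.2).mpr hmax
    have := Metric.infDist_zero_of_mem hx0
    rw [this] at hdist
    linarith
  have key : ∀ lam : ℝ, 0 < lam → lam ≤ 1 → ∀ x ∈ solSet G h lam X θhat r,
      ¬ Metric.infDist x S0 ≤ ε → lam ∈ T := by
    intro lam hl0 hl1 x hx hnot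
    obtain ⟨hxX, θ, ⟨hθamb, hθeq⟩, hVI⟩ := hx
    have hp : (lam, x, θ) ∈ K₀ := ⟨⟨le_of_lt hl0, hl1⟩, hxX, hθamb⟩
    have hq : (⟨(lam, x, θ), hp⟩ : ↥K₀) ∈ CQ := by
      refine ⟨?_, hVI, (lt_of_not_ge hnot).le⟩
      exact (obj_eq_nuval_iff' h lam x θhat r hAne hθamb).mp hθeq
    exact ⟨(lam, x, θ), ⟨_, hq, rfl⟩, rfl⟩
  rcases T.eq_empty_or_nonempty with hTe | hTne
  · refine ⟨1, one_pos, fun lam hl hl1 x hx => ?_⟩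
    by_contra hcon
    have hmem := key lam hl hl1 x hx hcon
    rw [hTe] at hmem
    exact hmem
  · have hδmem : sInf T ∈ T := hTcomp.sInf_mem hTne
    have hδpos : 0 < sInf T :=
      lt_of_le_of_ne (hTsub hδmem).1 (fun he => hT0 (by rw [he]; exact hδmem))
    refine ⟨sInf T / 2, by linarith, fun lam hl hlle x hx => ?_⟩
    by_contra hcon
    have hl1 : lam ≤ 1 := le_trans hlle (by linarith [(hTsub hδmem).2])
    have hmem := key lam hl hl1 x hx hcon
    have hge : sInf T ≤ lam := csInf_le hTcomp.bddBelow hmem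
    linarith
end
end

section
/- For any θ̂, θ̃ ∈ Θ and any r̂, r̃ ∈ [0,1], the Hausdorff distance (with respect to the ℓ∞ norm) between the two ambiguity sets satisfies ℍ(𝔹∞(θ̂, r̂) ∩ Θ, 𝔹∞(θ̃, r̃) ∩ Θ) ≤ ‖θ̂ − θ̃‖_∞ + |r̂ − r̃|. -/
open Set Filter MeasureTheory
open scoped ENNReal

noncomputable section

lemma amb_infDist_key {n : ℕ} (c1 c2 : Fin n → ℝ) (h2 : c2 ∈ simplex n)
    (r1 r2 : ℝ) (hr2 : 0 ≤ r2) :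
    ∀ θ ∈ amb c1 r1, Metric.infDist θ (amb c2 r2) ≤ ‖c1 - c2‖ + |r1 - r2| := by
  intro θ hθ
  obtain ⟨hball, hsimp⟩ := hθ
  obtain ⟨hsum, hpos⟩ := hsimp
  obtain ⟨hsum2, hpos2⟩ := h2
  set δ := ‖c1 - c2‖ with hδdef
  have hδ : 0 ≤ δ := norm_nonneg _
  have hθ2 : ‖θ - c2‖ ≤ r1 + δ := by
    have : θ - c2 = (θ - c1) + (c1 - c2) := by ring_nf
    rw [this]
    exact le_trans (norm_add_le _ _) (by simp only [Set.mem_setOf_eq] at hball; linarith [norm_add_le (θ - c1) (c1 - c2)])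
  by_cases hc : r1 + δ ≤ r2
  · have hmem : θ ∈ amb c2 r2 := ⟨le_trans hθ2 hc, hsum, hpos⟩
    rw [Metric.infDist_zero_of_mem hmem]
    positivity
  · push_neg at hc
    have hR : 0 < r1 + δ := lt_of_le_of_lt hr2 hc
    set α := 1 - r2 / (r1 + δ) with hαdef
    have hdiv1 : r2 / (r1 + δ) ≤ 1 := (div_le_one hR).2 hc.le
    have hdiv0 : 0 ≤ r2 / (r1 + δ) := div_nonneg hr2 hR.le
    have hα0 : 0 ≤ α := by simp only [hαdef]; linarith
    have hα1 : α ≤ 1 := by simp only [hαdef]; linarith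
    set θ' := (1 - α) • θ + α • c2 with hθ'def
    have hmem : θ' ∈ amb c2 r2 := by
      refine ⟨?_, ?_, ?_⟩
      · have heq : θ' - c2 = (1 - α) • (θ - c2) := by
          simp only [hθ'def, smul_sub]
          module
        rw [Set.mem_setOf_eq, heq, norm_smul, Real.norm_eq_abs, abs_of_nonneg (by linarith)]
        calc (1 - α) * ‖θ - c2‖ ≤ (1 - α) * (r1 + δ) := by
              apply mul_le_mul_of_nonneg_left hθ2 (by linarith)
          _ = r2 := by rw [hαdef, sub_sub_cancel, div_mul_cancel₀ _ hR.ne']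
      · have : ∀ j, θ' j = (1 - α) * θ j + α * c2 j := fun j => rfl
        simp only [this, Finset.sum_add_distrib, ← Finset.mul_sum, hsum, hsum2]
        ring
      · intro j
        have : θ' j = (1 - α) * θ j + α * c2 j := rfl
        rw [this]
        have h1 : 0 ≤ (1 - α) * θ j := mul_nonneg (by linarith) (hpos j)
        have h2 : 0 ≤ α * c2 j := mul_nonneg hα0 (hpos2 j)
        linarith
    calc Metric.infDist θ (amb c2 r2) ≤ dist θ θ' := Metric.infDist_le_dist_of_mem hmem
      _ = ‖α • (θ - c2)‖ := by
          rw [dist_eq_norm]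
          congr 1
          simp only [hθ'def, smul_sub]
          module
      _ = α * ‖θ - c2‖ := by
          rw [norm_smul, Real.norm_eq_abs, abs_of_nonneg hα0]
      _ ≤ α * (r1 + δ) := mul_le_mul_of_nonneg_left hθ2 hα0
      _ = r1 + δ - r2 := by rw [hαdef, sub_mul, one_mul, div_mul_cancel₀ _ hR.ne']
      _ ≤ δ + |r1 - r2| := by
          have := le_abs_self (r1 - r2)
          linarith

/-- Lemma 4.1: quantitative stability of Bayesian parametric ambiguity sets
(the metric on `Fin n → ℝ` is the sup metric, so this is the ℓ∞ Hausdorff distance). -/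
theorem ambiguity_set_stability {n : ℕ} (hn : 1 ≤ n)
    (θh θt : Fin n → ℝ) (hθh : θh ∈ simplex n) (hθt : θt ∈ simplex n)
    (rh rt : ℝ) (hrh : rh ∈ Set.Icc (0 : ℝ) 1) (hrt : rt ∈ Set.Icc (0 : ℝ) 1) :
    Metric.hausdorffDist (amb θh rh) (amb θt rt) ≤ ‖θh - θt‖ + |rh - rt| := by
  apply Metric.hausdorffDist_le_of_infDist (by positivity)
  · exact amb_infDist_key θh θt hθt rh rt hrt.1
  · intro x hx
    have := amb_infDist_key θt θh hθh rt rh hrh.1 x hx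
    rwa [norm_sub_rev, abs_sub_comm] at this
end
end

section
/- Suppose |h_j(x)| ≤ M for all x ∈ 𝒳 and j = 1,…,n. Then for every x ∈ 𝒳, λ ≥ 0, θ̂, θ̃ ∈ Θ and r̂, r̃ ∈ [0,1], |ν^λ(x, θ̂, r̂) − ν^λ(x, θ̃, r̃)| ≤ (nM + 2λ)(‖θ̂ − θ̃‖_∞ + |r̂ − r̃|). -/
open Set Filter MeasureTheory
open scoped ENNReal

noncomputable section

lemma obj_diff_le {n d : ℕ} (h : Fin n → (Fin d → ℝ) → ℝ) {lam : ℝ} (hlam : 0 ≤ lam)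
    (x : Fin d → ℝ) {M : ℝ} (hM : ∀ j, |h j x| ≤ M)
    {θ θ' : Fin n → ℝ} (hθ : θ ∈ simplex n) (hθ' : θ' ∈ simplex n) :
    obj h lam x θ - obj h lam x θ' ≤ ((n : ℝ) * M + 2 * lam) * ‖θ - θ'‖ := by
  set e := ‖θ - θ'‖ with he
  have hkey : ∀ j, |θ j - θ' j| ≤ e := by
    intro j
    have := norm_le_pi_norm (θ - θ') j
    simpa [Real.norm_eq_abs] using this
  have h1 : ∑ j, (θ j - θ' j) * h j x ≤ (n : ℝ) * (M * e) := by
    calc ∑ j, (θ j - θ' j) * h j x ≤ ∑ j : Fin n, M * e := by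
          apply Finset.sum_le_sum
          intro j _
          calc (θ j - θ' j) * h j x ≤ |(θ j - θ' j) * h j x| := le_abs_self _
            _ = |h j x| * |θ j - θ' j| := by rw [abs_mul]; ring
            _ ≤ M * e := by
                apply mul_le_mul (hM j) (hkey j) (abs_nonneg _)
                exact le_trans (abs_nonneg _) (hM j)
      _ = (n : ℝ) * (M * e) := by simp [Finset.sum_const, mul_comm]
  have h2 : lam * ∑ j, ((θ' j) ^ 2 - (θ j) ^ 2) ≤ lam * (2 * e) := by
    apply mul_le_mul_of_nonneg_left _ hlam
    calc ∑ j, ((θ' j) ^ 2 - (θ j) ^ 2) ≤ ∑ j, e * (θ' j + θ j) := by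
          apply Finset.sum_le_sum
          intro j _
          have hnn : 0 ≤ θ' j + θ j := add_nonneg (hθ'.2 j) (hθ.2 j)
          have habs : |θ' j - θ j| ≤ e := by
            rw [abs_sub_comm]; exact hkey j
          nlinarith [abs_nonneg (θ' j - θ j), le_abs_self (θ' j - θ j),
            neg_abs_le (θ' j - θ j)]
      _ = e * 2 := by
          rw [← Finset.mul_sum, Finset.sum_add_distrib, hθ'.1, hθ.1]; norm_num
      _ = 2 * e := by ring
  have hobj : obj h lam x θ - obj h lam x θ' =
      (∑ j, (θ j - θ' j) * h j x) + lam * ∑ j, ((θ' j) ^ 2 - (θ j) ^ 2) := by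
    have a1 : ∑ j, (θ j - θ' j) * h j x = ∑ j, θ j * h j x - ∑ j, θ' j * h j x := by
      rw [← Finset.sum_sub_distrib]
      exact Finset.sum_congr rfl fun j _ => by ring
    have a2 : lam * ∑ j, ((θ' j) ^ 2 - (θ j) ^ 2)
        = lam * ∑ j, (θ' j) ^ 2 - lam * ∑ j, (θ j) ^ 2 := by
      rw [Finset.sum_sub_distrib, mul_sub]
    simp only [obj]
    rw [a1, a2]
    ring
  rw [hobj]
  nlinarith [h1, h2]

lemma transfer {n : ℕ} {c c' : Fin n → ℝ} (hc' : c' ∈ simplex n)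
    {r r' : ℝ} (hr : 0 ≤ r) (hr' : 0 ≤ r') {θ : Fin n → ℝ} (hθ : θ ∈ amb c r) :
    ∃ θ' ∈ amb c' r', ‖θ - θ'‖ ≤ ‖c - c'‖ + |r - r'| := by
  have hΔ : (0:ℝ) ≤ ‖c - c'‖ := norm_nonneg _
  have hθc' : ‖θ - c'‖ ≤ r + ‖c - c'‖ := by
    calc ‖θ - c'‖ = ‖(θ - c) + (c - c')‖ := by rw [sub_add_sub_cancel]
      _ ≤ ‖θ - c‖ + ‖c - c'‖ := norm_add_le _ _
      _ ≤ r + ‖c - c'‖ := by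
          have h01 : ‖θ - c‖ ≤ r := hθ.1
          linarith
  by_cases hle : ‖θ - c'‖ ≤ r'
  · exact ⟨θ, ⟨hle, hθ.2⟩, by simp [abs_nonneg, add_nonneg hΔ (abs_nonneg _)]⟩
  · push_neg at hle
    set R := r + ‖c - c'‖ with hR
    have hRpos : 0 < R := lt_of_le_of_lt hr' (lt_of_lt_of_le hle hθc')
    set t := (R - r') / R with ht
    have ht0 : 0 ≤ t := div_nonneg (by linarith [hθc', hle.le]) hRpos.le
    have ht1 : t ≤ 1 := by
      rw [ht, div_le_one hRpos]; linarith
    have htR : t * R = R - r' := by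
      rw [ht]; field_simp
    refine ⟨θ + t • (c' - θ), ⟨?_, ?_, ?_⟩, ?_⟩
    · show ‖θ + t • (c' - θ) - c'‖ ≤ r'
      have heq : θ + t • (c' - θ) - c' = (1 - t) • (θ - c') := by
        funext j
        simp [Pi.smul_apply, smul_eq_mul]
        ring
      rw [heq, norm_smul, Real.norm_eq_abs, abs_of_nonneg (by linarith : (0:ℝ) ≤ 1 - t)]
      calc (1 - t) * ‖θ - c'‖ ≤ (1 - t) * R :=
            mul_le_mul_of_nonneg_left hθc' (by linarith)
        _ = r' := by nlinarith [htR]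
    · show ∑ j, (θ + t • (c' - θ)) j = 1
      have : ∀ j, (θ + t • (c' - θ)) j = θ j + t * (c' j - θ j) := fun j => rfl
      simp only [this]
      rw [Finset.sum_add_distrib, ← Finset.mul_sum, Finset.sum_sub_distrib,
        hθ.2.1, hc'.1]
      ring
    · intro j
      show 0 ≤ θ j + t * (c' j - θ j)
      nlinarith [hθ.2.2 j, hc'.2 j]
    · have heq : θ - (θ + t • (c' - θ)) = t • (θ - c') := by
        funext j
        simp [Pi.smul_apply, smul_eq_mul]
        ring
      rw [heq, norm_smul, Real.norm_eq_abs, abs_of_nonneg ht0]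
      calc t * ‖θ - c'‖ ≤ t * R := mul_le_mul_of_nonneg_left hθc' ht0
        _ = R - r' := htR
        _ ≤ ‖c - c'‖ + |r - r'| := by
            rw [hR]
            have : r - r' ≤ |r - r'| := le_abs_self _
            linarith

lemma obj_le_M {n d : ℕ} (h : Fin n → (Fin d → ℝ) → ℝ) {lam : ℝ} (hlam : 0 ≤ lam)
    (x : Fin d → ℝ) {M : ℝ} (hM : ∀ j, |h j x| ≤ M)
    {θ : Fin n → ℝ} (hθ : θ ∈ simplex n) : obj h lam x θ ≤ M := by
  have h1 : ∑ j, θ j * h j x ≤ M := by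
    calc ∑ j, θ j * h j x ≤ ∑ j, θ j * M := by
          apply Finset.sum_le_sum
          intro j _
          exact mul_le_mul_of_nonneg_left (le_trans (le_abs_self _) (hM j)) (hθ.2 j)
      _ = M := by rw [← Finset.sum_mul, hθ.1, one_mul]
  have h2 : 0 ≤ lam * ∑ j, (θ j) ^ 2 :=
    mul_nonneg hlam (Finset.sum_nonneg fun j _ => sq_nonneg _)
  simp only [obj]
  linarith

lemma simplex_mem_amb {n : ℕ} {c : Fin n → ℝ} (hc : c ∈ simplex n) {r : ℝ} (hr : 0 ≤ r) :
    c ∈ amb c r := ⟨by simp [hr], hc⟩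

lemma nuval_le_side {n d : ℕ} (hn : 1 ≤ n)
    (h : Fin n → (Fin d → ℝ) → ℝ) {lam : ℝ} (hlam : 0 ≤ lam)
    (x : Fin d → ℝ) {M : ℝ} (hM : ∀ j, |h j x| ≤ M)
    {c c' : Fin n → ℝ} (hc : c ∈ simplex n) (hc' : c' ∈ simplex n)
    {r r' : ℝ} (hr : 0 ≤ r) (hr' : 0 ≤ r') :
    nuval h lam x c r ≤ nuval h lam x c' r'
      + ((n : ℝ) * M + 2 * lam) * (‖c - c'‖ + |r - r'|) := by
  have hM0 : 0 ≤ M := le_trans (abs_nonneg _) (hM ⟨0, hn⟩)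
  have hK : 0 ≤ (n : ℝ) * M + 2 * lam := by positivity
  have hbdd : BddAbove (obj h lam x '' amb c' r') := by
    refine ⟨M, ?_⟩
    rintro b ⟨θ, hθ, rfl⟩
    exact obj_le_M h hlam x hM hθ.2
  have hne : (obj h lam x '' amb c r).Nonempty :=
    ⟨_, Set.mem_image_of_mem _ (simplex_mem_amb hc hr)⟩
  refine csSup_le hne ?_
  rintro b ⟨θ, hθ, rfl⟩
  obtain ⟨θ', hθ', hdist⟩ := transfer hc' hr hr' hθ
  have hb1 : obj h lam x θ - obj h lam x θ' ≤ ((n : ℝ) * M + 2 * lam) * ‖θ - θ'‖ :=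
    obj_diff_le h hlam x hM hθ.2 hθ'.2
  have hb2 : ((n : ℝ) * M + 2 * lam) * ‖θ - θ'‖
      ≤ ((n : ℝ) * M + 2 * lam) * (‖c - c'‖ + |r - r'|) :=
    mul_le_mul_of_nonneg_left hdist hK
  have hb3 : obj h lam x θ' ≤ nuval h lam x c' r' :=
    le_csSup hbdd (Set.mem_image_of_mem _ hθ')
  linarith

theorem nu_param_lipschitz' {n d : ℕ} (hn : 1 ≤ n)
    (h : Fin n → (Fin d → ℝ) → ℝ) (M : ℝ) :
    ∀ x : Fin d → ℝ, (∀ j, |h j x| ≤ M) → ∀ lam : ℝ, 0 ≤ lam →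
      ∀ θh ∈ simplex n, ∀ θt ∈ simplex n,
      ∀ rh ∈ Set.Icc (0 : ℝ) 1, ∀ rt ∈ Set.Icc (0 : ℝ) 1,
      |nuval h lam x θh rh - nuval h lam x θt rt|
        ≤ ((n : ℝ) * M + 2 * lam) * (‖θh - θt‖ + |rh - rt|) := by
  intro x hM lam hlam θh hθh θt hθt rh hrh rt hrt
  rw [abs_sub_le_iff]
  constructor
  · have := nuval_le_side hn h hlam x hM hθh hθt hrh.1 hrt.1
    linarith
  · have := nuval_le_side hn h hlam x hM hθt hθh hrt.1 hrh.1
    rw [norm_sub_rev θt θh, abs_sub_comm rt rh] at this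
    linarith


/-- Lemma 4.2: Lipschitz continuity of the regularized optimal value in the
ambiguity-set parameters. -/
theorem nu_param_lipschitz {n d : ℕ} (hn : 1 ≤ n) (hd : 1 ≤ d)
    (X : Set (Fin d → ℝ)) (hXne : X.Nonempty) (hXcomp : IsCompact X) (hXconv : Convex ℝ X)
    (h : Fin n → (Fin d → ℝ) → ℝ) (M : ℝ) (hM : ∀ j, ∀ x ∈ X, |h j x| ≤ M) :
    ∀ x ∈ X, ∀ lam : ℝ, 0 ≤ lam →
      ∀ θh ∈ simplex n, ∀ θt ∈ simplex n,
      ∀ rh ∈ Set.Icc (0 : ℝ) 1, ∀ rt ∈ Set.Icc (0 : ℝ) 1,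
      |nuval h lam x θh rh - nuval h lam x θt rt|
        ≤ ((n : ℝ) * M + 2 * lam) * (‖θh - θt‖ + |rh - rt|) := by
  intro x hx lam hlam θh hθh θt hθt rh hrh rt hrt
  exact nu_param_lipschitz' hn h M x (fun j => hM j x hx) lam hlam θh hθh θt hθt rh hrh rt hrt
end
end

section
/- Fix λ > 0. Suppose each G_j and each h_j is Lipschitz continuous, |h_j(x)| ≤ M and every component of G_j(x) is bounded by M in absolute value on 𝒳. Let (θ_N, r_N) → (θ^c, r^c) in Θ × [0,1]. Assume: (a) there exist p ≥ 1 and γ > 0 such that ψ_x^λ(τ) ≥ γ τ^p for all x ∈ 𝒳 and τ ≥ 0, with the lower-level growth function taken at (θ^c, r^c) and at every (θ_N, r_N); and (b) there exist a neighborhood U of (θ^c, r^c) in Θ × [0,1], constants p̄ ≥ 1, γ̄ > 0 and τ₀ > 0 such that ψ^λ_{θ,r}(τ) ≥ γ̄ τ^{p̄} for all (θ, r) ∈ U and τ ∈ [0, τ₀]. Then for every τ > 0 and every t > 0: (i) liminf_{N→∞} ψ^λ_{θ_N, r_N}(τ) ≥ ψ^λ_{θ^c, r^c}(τ), and (ii)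 limsup_{N→∞} (ψ^λ_{θ_N, r_N})^{-1}(t) ≤ (ψ^λ_{θ^c, r^c})^{-1}(t). -/
open Set Filter MeasureTheory
open scoped ENNReal

noncomputable section

section AuxLemmas
open Metric Topology

namespace BDRVI

open Metric

variable {n d : ℕ}

lemma simplex_isClosed : IsClosed (simplex n) := by
  have : simplex n = {θ : Fin n → ℝ | ∑ j, θ j = 1} ∩ ⋂ j, {θ | 0 ≤ θ j} := by
    ext θ; simp [simplex]
  rw [this]
  exact (isClosed_eq (by fun_prop) continuous_const).inter
    (isClosed_iInter fun j => isClosed_le continuous_const (continuous_apply j))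

lemma simplex_mem_bounds {θ : Fin n → ℝ} (hθ : θ ∈ simplex n) (j : Fin n) :
    0 ≤ θ j ∧ θ j ≤ 1 := by
  refine ⟨hθ.2 j, ?_⟩
  calc θ j ≤ ∑ i, θ i := Finset.single_le_sum (fun i _ => hθ.2 i) (Finset.mem_univ j)
  _ = 1 := hθ.1

lemma simplex_norm_le {θ : Fin n → ℝ} (hθ : θ ∈ simplex n) : ‖θ‖ ≤ 1 := by
  rw [pi_norm_le_iff_of_nonneg zero_le_one]
  intro j
  rw [Real.norm_eq_abs, abs_le]
  have := simplex_mem_bounds hθ j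
  constructor <;> linarith [this.1, this.2]

lemma simplex_isCompact : IsCompact (simplex n) := by
  refine (isCompact_closedBall (0 : Fin n → ℝ) 1).of_isClosed_subset simplex_isClosed ?_
  intro θ hθ
  simpa [mem_closedBall_zero_iff] using simplex_norm_le hθ

lemma amb_isClosed {c : Fin n → ℝ} {r : ℝ} : IsClosed (amb c r) :=
  (isClosed_le (by fun_prop) continuous_const).inter simplex_isClosed

lemma amb_subset_simplex {c : Fin n → ℝ} {r : ℝ} : amb c r ⊆ simplex n := fun _ h => h.2

lemma amb_isCompact {c : Fin n → ℝ} {r : ℝ} : IsCompact (amb c r) :=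
  simplex_isCompact.of_isClosed_subset amb_isClosed amb_subset_simplex

lemma amb_self_mem {c : Fin n → ℝ} {r : ℝ} (hc : c ∈ simplex n) (hr : 0 ≤ r) :
    c ∈ amb c r := ⟨by simp [hr], hc⟩

lemma obj_continuous {h : Fin n → (Fin d → ℝ) → ℝ} {lam : ℝ} {x : Fin d → ℝ} :
    Continuous (obj h lam x) := by
  unfold obj; fun_prop

lemma exists_max {h : Fin n → (Fin d → ℝ) → ℝ} {lam : ℝ} {x : Fin d → ℝ}
    {c : Fin n → ℝ} {r : ℝ} (hc : c ∈ simplex n) (hr : 0 ≤ r) :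
    ∃ θ ∈ amb c r, obj h lam x θ = nuval h lam x c r ∧
      ∀ θ' ∈ amb c r, obj h lam x θ' ≤ obj h lam x θ := by
  obtain ⟨θ, hθm, hθmax⟩ := amb_isCompact.exists_isMaxOn ⟨c, amb_self_mem hc hr⟩
    obj_continuous.continuousOn
  refine ⟨θ, hθm, ?_, fun θ' h' => hθmax h'⟩
  have : IsGreatest (obj h lam x '' amb c r) (obj h lam x θ) :=
    ⟨⟨θ, hθm, rfl⟩, by rintro _ ⟨θ', h', rfl⟩; exact hθmax h'⟩
  exact (this.csSup_eq).symm

lemma bddAbove_obj {h : Fin n → (Fin d → ℝ) → ℝ} {lam : ℝ} {x : Fin d → ℝ}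
    {c : Fin n → ℝ} {r : ℝ} : BddAbove (obj h lam x '' amb c r) :=
  (amb_isCompact.image obj_continuous).bddAbove

lemma obj_le_nuval {h : Fin n → (Fin d → ℝ) → ℝ} {lam : ℝ} {x : Fin d → ℝ}
    {c : Fin n → ℝ} {r : ℝ} {θ : Fin n → ℝ} (hθ : θ ∈ amb c r) :
    obj h lam x θ ≤ nuval h lam x c r :=
  le_csSup bddAbove_obj ⟨θ, hθ, rfl⟩

lemma argmax_nonempty {h : Fin n → (Fin d → ℝ) → ℝ} {lam : ℝ} {x : Fin d → ℝ}
    {c : Fin n → ℝ} {r : ℝ} (hc : c ∈ simplex n) (hr : 0 ≤ r) :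
    (argmaxSet h lam x c r).Nonempty := by
  obtain ⟨θ, hθm, hθ, -⟩ := exists_max (h := h) (lam := lam) (x := x) hc hr
  exact ⟨θ, hθm, hθ⟩

lemma argmax_isClosed {h : Fin n → (Fin d → ℝ) → ℝ} {lam : ℝ} {x : Fin d → ℝ}
    {c : Fin n → ℝ} {r : ℝ} : IsClosed (argmaxSet h lam x c r) := by
  have : argmaxSet h lam x c r = amb c r ∩ (obj h lam x) ⁻¹' {nuval h lam x c r} := by
    ext θ; simp [argmaxSet]
  rw [this]
  exact amb_isClosed.inter (isClosed_singleton.preimage obj_continuous)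

lemma argmax_subset_amb {h : Fin n → (Fin d → ℝ) → ℝ} {lam : ℝ} {x : Fin d → ℝ}
    {c : Fin n → ℝ} {r : ℝ} : argmaxSet h lam x c r ⊆ amb c r := fun _ h => h.1

end BDRVI

namespace BDRVI

variable {n d : ℕ}

lemma comp_abs_le_norm (θ : Fin n → ℝ) (j : Fin n) : |θ j| ≤ ‖θ‖ := by
  simpa [Real.norm_eq_abs] using norm_le_pi_norm θ j

lemma exists_uniform_lip {E : Type*} [SeminormedAddGroup E] {X : Set (Fin d → ℝ)}
    (f : Fin n → (Fin d → ℝ) → E)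
    (hf : ∀ j, ∃ L : ℝ, ∀ x ∈ X, ∀ y ∈ X, ‖f j x - f j y‖ ≤ L * ‖x - y‖) :
    ∃ K : ℝ, 0 ≤ K ∧ ∀ j, ∀ x ∈ X, ∀ y ∈ X, ‖f j x - f j y‖ ≤ K * ‖x - y‖ := by
  choose L hL using hf
  refine ⟨∑ j, max (L j) 0, Finset.sum_nonneg fun j _ => le_max_right _ _, fun j x hx y hy => ?_⟩
  calc ‖f j x - f j y‖ ≤ L j * ‖x - y‖ := hL j x hx y hy
  _ ≤ max (L j) 0 * ‖x - y‖ := mul_le_mul_of_nonneg_right (le_max_left _ _) (norm_nonneg _)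
  _ ≤ (∑ j, max (L j) 0) * ‖x - y‖ := by
      apply mul_le_mul_of_nonneg_right _ (norm_nonneg _)
      exact Finset.single_le_sum (fun i _ => le_max_right (L i) 0) (Finset.mem_univ j)

lemma obj_lip_theta {X : Set (Fin d → ℝ)} {h : Fin n → (Fin d → ℝ) → ℝ} {lam M : ℝ}
    (hM : ∀ j, ∀ x ∈ X, |h j x| ≤ M) (hlam : 0 ≤ lam) {x : Fin d → ℝ} (hx : x ∈ X)
    {θ θ' : Fin n → ℝ} (hθ : θ ∈ simplex n) (hθ' : θ' ∈ simplex n) :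
    |obj h lam x θ - obj h lam x θ'| ≤ (n * M + 2 * lam) * ‖θ - θ'‖ := by
  have e1 : ∑ j, (θ j - θ' j) * h j x = (∑ j, θ j * h j x) - ∑ j, θ' j * h j x := by
    rw [← Finset.sum_sub_distrib]; exact Finset.sum_congr rfl fun j _ => by ring
  have e2 : ∑ j, (θ j - θ' j) * (θ j + θ' j) = (∑ j, (θ j)^2) - ∑ j, (θ' j)^2 := by
    rw [← Finset.sum_sub_distrib]; exact Finset.sum_congr rfl fun j _ => by ring
  have key : obj h lam x θ - obj h lam x θ' =
      (∑ j, (θ j - θ' j) * h j x) - lam * ∑ j, (θ j - θ' j) * (θ j + θ' j) := by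
    simp only [obj]; rw [e1, e2]; ring
  have hcomp : ∀ j, |θ j - θ' j| ≤ ‖θ - θ'‖ := by
    intro j; simpa using comp_abs_le_norm (θ - θ') j
  have h1 : |∑ j, (θ j - θ' j) * h j x| ≤ (n * M) * ‖θ - θ'‖ := by
    calc |∑ j, (θ j - θ' j) * h j x| ≤ ∑ j, |(θ j - θ' j) * h j x| :=
        Finset.abs_sum_le_sum_abs _ _
    _ ≤ ∑ _j : Fin n, ‖θ - θ'‖ * M := by
        apply Finset.sum_le_sum; intro j _
        rw [abs_mul]
        apply mul_le_mul (hcomp j) (hM j x hx) (abs_nonneg _)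
        exact norm_nonneg _
    _ = (n * M) * ‖θ - θ'‖ := by
        rw [Finset.sum_const]; simp [Finset.card_univ]; ring
  have h2 : |∑ j, (θ j - θ' j) * (θ j + θ' j)| ≤ 2 * ‖θ - θ'‖ := by
    calc |∑ j, (θ j - θ' j) * (θ j + θ' j)| ≤ ∑ j, |(θ j - θ' j) * (θ j + θ' j)| :=
        Finset.abs_sum_le_sum_abs _ _
    _ ≤ ∑ j, ‖θ - θ'‖ * (θ j + θ' j) := by
        apply Finset.sum_le_sum; intro j _
        rw [abs_mul]
        apply mul_le_mul (hcomp j) _ (abs_nonneg _) (norm_nonneg _)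
        rw [abs_of_nonneg (by linarith [hθ.2 j, hθ'.2 j])]
    _ = ‖θ - θ'‖ * (∑ j, (θ j + θ' j)) := by rw [← Finset.mul_sum]
    _ = 2 * ‖θ - θ'‖ := by
        rw [Finset.sum_add_distrib, hθ.1, hθ'.1]; ring
  calc |obj h lam x θ - obj h lam x θ'|
      ≤ |∑ j, (θ j - θ' j) * h j x| + lam * |∑ j, (θ j - θ' j) * (θ j + θ' j)| := by
        rw [key]
        refine (abs_sub _ _).trans ?_
        rw [abs_mul, abs_of_nonneg hlam]
  _ ≤ (n * M) * ‖θ - θ'‖ + lam * (2 * ‖θ - θ'‖) := by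
        refine add_le_add h1 (mul_le_mul_of_nonneg_left h2 hlam)
  _ = (n * M + 2 * lam) * ‖θ - θ'‖ := by ring

lemma obj_lip_x {X : Set (Fin d → ℝ)} {h : Fin n → (Fin d → ℝ) → ℝ} {lam Kh : ℝ}
    (hKh : ∀ j, ∀ x ∈ X, ∀ y ∈ X, |h j x - h j y| ≤ Kh * ‖x - y‖) (hKh0 : 0 ≤ Kh)
    {x y : Fin d → ℝ} (hx : x ∈ X) (hy : y ∈ X) {θ : Fin n → ℝ} (hθ : θ ∈ simplex n) :
    |obj h lam x θ - obj h lam y θ| ≤ Kh * ‖x - y‖ := by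
  have key : obj h lam x θ - obj h lam y θ = ∑ j, θ j * (h j x - h j y) := by
    have e1 : ∑ j, θ j * (h j x - h j y) = (∑ j, θ j * h j x) - ∑ j, θ j * h j y := by
      rw [← Finset.sum_sub_distrib]; exact Finset.sum_congr rfl fun j _ => by ring
    simp only [obj]; rw [e1]; ring
  rw [key]
  calc |∑ j, θ j * (h j x - h j y)| ≤ ∑ j, |θ j * (h j x - h j y)| :=
      Finset.abs_sum_le_sum_abs _ _
  _ ≤ ∑ j, θ j * (Kh * ‖x - y‖) := by
      apply Finset.sum_le_sum; intro j _
      rw [abs_mul, abs_of_nonneg (hθ.2 j)]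
      exact mul_le_mul_of_nonneg_left (hKh j x hx y hy) (hθ.2 j)
  _ = Kh * ‖x - y‖ := by rw [← Finset.sum_mul, hθ.1, one_mul]

lemma amb_transfer {c c' : Fin n → ℝ} {r r' : ℝ} (hc' : c' ∈ simplex n)
    (hr : 0 ≤ r) (hr' : 0 ≤ r') {θ : Fin n → ℝ} (hθ : θ ∈ amb c r) :
    ∃ θ' ∈ amb c' r', ‖θ - θ'‖ ≤ ‖c - c'‖ + |r - r'| := by
  set Δ := ‖c - c'‖ + |r - r'| with hΔdef
  have hΔ0 : 0 ≤ Δ := add_nonneg (norm_nonneg _) (abs_nonneg _)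
  rcases eq_or_lt_of_le (add_nonneg hr' hΔ0) with hzero | hpos
  · -- r' = 0 and Δ = 0
    have hr'0 : r' = 0 := by
      have := hΔ0; have := hr'; linarith [hzero.symm ▸ (by linarith : (0:ℝ) ≤ 0)]
    have hΔz : Δ = 0 := by linarith [hzero]
    have hcc : c = c' := by
      have : ‖c - c'‖ = 0 := le_antisymm (by rw [hΔdef] at hΔz; nlinarith [abs_nonneg (r - r'), norm_nonneg (c - c')]) (norm_nonneg _)
      rwa [norm_sub_eq_zero_iff] at this
    have hrr : r = 0 := by
      have : |r - r'| = 0 := le_antisymm (by rw [hΔdef] at hΔz; nlinarith [abs_nonneg (r - r'), norm_nonneg (c - c')]) (abs_nonneg _)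
      rw [abs_eq_zero, sub_eq_zero] at this; rw [this, hr'0]
    have hθc : θ = c := by
      have h1 : ‖θ - c‖ ≤ r := hθ.1
      rw [hrr] at h1
      have : ‖θ - c‖ = 0 := le_antisymm h1 (norm_nonneg _)
      rwa [norm_sub_eq_zero_iff] at this
    refine ⟨θ, ⟨?_, hθ.2⟩, by simp [hΔ0]⟩
    rw [hθc, hcc]; simp [hr']
  · set s := Δ / (r' + Δ) with hsdef
    have hs0 : 0 ≤ s := div_nonneg hΔ0 (le_of_lt hpos)
    have hs1 : s ≤ 1 := by
      rw [hsdef, div_le_one hpos]; linarith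
    set θ' := fun j => (1 - s) * θ j + s * c' j with hθ'def
    have hsub1 : θ' - c' = (1 - s) • (θ - c') := by
      funext j; simp [hθ'def]; ring
    have hsub2 : θ - θ' = s • (θ - c') := by
      funext j; simp [hθ'def]; ring
    have hnc' : ‖θ - c'‖ ≤ r' + Δ := by
      calc ‖θ - c'‖ ≤ ‖θ - c‖ + ‖c - c'‖ := norm_sub_le_norm_sub_add_norm_sub _ _ _
      _ ≤ r + ‖c - c'‖ := by
          have h1 : ‖θ - c‖ ≤ r := hθ.1
          linarith
      _ ≤ r' + Δ := by
          have : r ≤ r' + |r - r'| := by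
            rcases abs_cases (r - r') with ⟨he, _⟩ | ⟨he, _⟩ <;> linarith
          rw [hΔdef]; linarith
    refine ⟨θ', ⟨?_, ?_, ?_⟩, ?_⟩
    · show ‖θ' - c'‖ ≤ r'
      rw [hsub1, norm_smul, Real.norm_eq_abs, abs_of_nonneg (by linarith)]
      calc (1 - s) * ‖θ - c'‖ ≤ (1 - s) * (r' + Δ) :=
          mul_le_mul_of_nonneg_left hnc' (by linarith)
      _ = r' := by rw [hsdef]; field_simp; ring
    · show ∑ j, θ' j = 1
      simp only [hθ'def]
      rw [Finset.sum_add_distrib, ← Finset.mul_sum, ← Finset.mul_sum, hθ.2.1, hc'.1]; ring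
    · intro j
      have := hθ.2.2 j; have := hc'.2 j
      have h1 : 0 ≤ (1 - s) * θ j := mul_nonneg (by linarith) (hθ.2.2 j)
      have h2 : 0 ≤ s * c' j := mul_nonneg hs0 (hc'.2 j)
      simp only [hθ'def]; linarith
    · rw [hsub2, norm_smul, Real.norm_eq_abs, abs_of_nonneg hs0]
      calc s * ‖θ - c'‖ ≤ s * (r' + Δ) := mul_le_mul_of_nonneg_left hnc' hs0
      _ = Δ := by rw [hsdef]; field_simp

lemma nuval_le {X : Set (Fin d → ℝ)} {h : Fin n → (Fin d → ℝ) → ℝ} {lam M Kh : ℝ}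
    (hM : ∀ j, ∀ x ∈ X, |h j x| ≤ M) (hM0 : 0 ≤ M) (hlam : 0 ≤ lam)
    (hKh : ∀ j, ∀ x ∈ X, ∀ y ∈ X, |h j x - h j y| ≤ Kh * ‖x - y‖) (hKh0 : 0 ≤ Kh)
    {x x' : Fin d → ℝ} (hx : x ∈ X) (hx' : x' ∈ X)
    {c c' : Fin n → ℝ} {r r' : ℝ} (hc : c ∈ simplex n) (hc' : c' ∈ simplex n)
    (hr : 0 ≤ r) (hr' : 0 ≤ r') :
    nuval h lam x c r ≤ nuval h lam x' c' r' + Kh * ‖x - x'‖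
      + (n * M + 2 * lam) * (‖c - c'‖ + |r - r'|) := by
  obtain ⟨θ, hθm, hθeq, -⟩ := exists_max (h := h) (lam := lam) (x := x) hc hr
  obtain ⟨θ', hθ'm, hθθ'⟩ := amb_transfer hc' hr hr' hθm
  have hθs : θ ∈ simplex n := amb_subset_simplex hθm
  have hθ's : θ' ∈ simplex n := amb_subset_simplex hθ'm
  have l1 : obj h lam x θ - obj h lam x θ' ≤ (n * M + 2 * lam) * (‖c - c'‖ + |r - r'|) := by
    have := obj_lip_theta hM hlam hx hθs hθ's
    have hmul : (n * M + 2 * lam) * ‖θ - θ'‖ ≤ (n * M + 2 * lam) * (‖c - c'‖ + |r - r'|) := by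
      apply mul_le_mul_of_nonneg_left hθθ'
      positivity
    calc obj h lam x θ - obj h lam x θ' ≤ |obj h lam x θ - obj h lam x θ'| := le_abs_self _
    _ ≤ (n * M + 2 * lam) * ‖θ - θ'‖ := this
    _ ≤ _ := hmul
  have l2 : obj h lam x θ' - obj h lam x' θ' ≤ Kh * ‖x - x'‖ :=
    le_trans (le_abs_self _) (obj_lip_x hKh hKh0 hx hx' hθ's)
  have l3 : obj h lam x' θ' ≤ nuval h lam x' c' r' := obj_le_nuval hθ'm
  rw [← hθeq]; linarith

end BDRVI

namespace BDRVI

variable {n d : ℕ}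

lemma argmax_isCompact {h : Fin n → (Fin d → ℝ) → ℝ} {lam : ℝ} {x : Fin d → ℝ}
    {c : Fin n → ℝ} {r : ℝ} : IsCompact (argmaxSet h lam x c r) :=
  amb_isCompact.of_isClosed_subset argmax_isClosed argmax_subset_amb

lemma growth_unpack {X : Set (Fin d → ℝ)} {h : Fin n → (Fin d → ℝ) → ℝ}
    {lam γ p : ℝ} {c : Fin n → ℝ} {r : ℝ}
    (hgrow : ∀ x ∈ X, ∀ τ : ℝ, 0 ≤ τ → ENNReal.ofReal (γ * τ ^ p) ≤ psiLow h lam x c r τ)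
    {x : Fin d → ℝ} (hx : x ∈ X) {θ : Fin n → ℝ} (hθ : θ ∈ amb c r) {τ : ℝ} (hτ : 0 ≤ τ)
    (hle : τ ≤ Metric.infDist θ (argmaxSet h lam x c r)) :
    γ * τ ^ p ≤ nuval h lam x c r - obj h lam x θ := by
  have h1 : psiLow h lam x c r τ ≤ ENNReal.ofReal (nuval h lam x c r - obj h lam x θ) :=
    iInf₂_le θ ⟨hθ, hle⟩
  have h2 := (hgrow x hx τ hτ).trans h1
  rwa [ENNReal.ofReal_le_ofReal_iff (sub_nonneg.2 (obj_le_nuval hθ))] at h2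

lemma nuval_le_param {X : Set (Fin d → ℝ)} {h : Fin n → (Fin d → ℝ) → ℝ} {lam M : ℝ}
    (hM : ∀ j, ∀ x ∈ X, |h j x| ≤ M) (hM0 : 0 ≤ M) (hlam : 0 ≤ lam)
    {x : Fin d → ℝ} (hx : x ∈ X)
    {c c' : Fin n → ℝ} {r r' : ℝ} (hc : c ∈ simplex n) (hc' : c' ∈ simplex n)
    (hr : 0 ≤ r) (hr' : 0 ≤ r') :
    nuval h lam x c r ≤ nuval h lam x c' r'
      + (n * M + 2 * lam) * (‖c - c'‖ + |r - r'|) := by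
  obtain ⟨θ, hθm, hθeq, -⟩ := exists_max (h := h) (lam := lam) (x := x) hc hr
  obtain ⟨θ', hθ'm, hθθ'⟩ := amb_transfer hc' hr hr' hθm
  have l1 : obj h lam x θ - obj h lam x θ' ≤ (n * M + 2 * lam) * (‖c - c'‖ + |r - r'|) := by
    calc obj h lam x θ - obj h lam x θ' ≤ |obj h lam x θ - obj h lam x θ'| := le_abs_self _
    _ ≤ (n * M + 2 * lam) * ‖θ - θ'‖ :=
        obj_lip_theta hM hlam hx (amb_subset_simplex hθm) (amb_subset_simplex hθ'm)
    _ ≤ _ := by apply mul_le_mul_of_nonneg_left hθθ'; positivity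
  have l3 : obj h lam x θ' ≤ nuval h lam x c' r' := obj_le_nuval hθ'm
  rw [← hθeq]; linarith

lemma rpow_le_of_pow_le {a b p : ℝ} (ha : 0 ≤ a) (hp : 1 ≤ p) (hab : a ^ p ≤ b) :
    a ≤ b ^ (1 / p) := by
  have hp0 : 0 < p := lt_of_lt_of_le zero_lt_one hp
  have h1 : (a ^ p) ^ (1 / p) ≤ b ^ (1 / p) :=
    Real.rpow_le_rpow (Real.rpow_nonneg ha p) hab (by positivity)
  calc a = a ^ (p * (1 / p)) := by
        rw [mul_one_div_cancel (ne_of_gt hp0), Real.rpow_one]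
  _ = (a ^ p) ^ (1 / p) := Real.rpow_mul ha p (1 / p)
  _ ≤ b ^ (1 / p) := h1

lemma argmax_transfer {X : Set (Fin d → ℝ)} {h : Fin n → (Fin d → ℝ) → ℝ}
    {lam M γ p : ℝ} {c c' : Fin n → ℝ} {r r' : ℝ}
    (hM : ∀ j, ∀ x ∈ X, |h j x| ≤ M) (hM0 : 0 ≤ M) (hlam : 0 ≤ lam)
    (hp : 1 ≤ p) (hγ : 0 < γ)
    (hc : c ∈ simplex n) (hc' : c' ∈ simplex n) (hr : 0 ≤ r) (hr' : 0 ≤ r')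
    (hgrow' : ∀ x ∈ X, ∀ τ : ℝ, 0 ≤ τ →
      ENNReal.ofReal (γ * τ ^ p) ≤ psiLow h lam x c' r' τ)
    {x : Fin d → ℝ} (hx : x ∈ X) {θs : Fin n → ℝ} (hθs : θs ∈ argmaxSet h lam x c r) :
    ∃ θh ∈ argmaxSet h lam x c' r',
      ‖θs - θh‖ ≤ (‖c - c'‖ + |r - r'|)
        + (2 * (n * M + 2 * lam) * (‖c - c'‖ + |r - r'|) / γ) ^ (1 / p) := by
  set Δ := ‖c - c'‖ + |r - r'| with hΔdef
  set L : ℝ := n * M + 2 * lam with hLdef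
  have hL0 : 0 ≤ L := by rw [hLdef]; positivity
  obtain ⟨θ', hθ'm, hθθ'⟩ := amb_transfer hc' hr hr' hθs.1
  have hgap : nuval h lam x c' r' - obj h lam x θ' ≤ 2 * L * Δ := by
    have l1 : obj h lam x θs - obj h lam x θ' ≤ L * Δ := by
      calc obj h lam x θs - obj h lam x θ' ≤ |obj h lam x θs - obj h lam x θ'| := le_abs_self _
      _ ≤ L * ‖θs - θ'‖ :=
          obj_lip_theta hM hlam hx (amb_subset_simplex hθs.1) (amb_subset_simplex hθ'm)
      _ ≤ L * Δ := mul_le_mul_of_nonneg_left hθθ' hL0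
    have l2 : nuval h lam x c' r' ≤ nuval h lam x c r + L * Δ := by
      have := nuval_le_param hM hM0 hlam hx hc' hc hr' hr
      rw [norm_sub_rev c' c, abs_sub_comm r' r] at this
      exact this
    have l3 : obj h lam x θs = nuval h lam x c r := hθs.2
    linarith
  set τs := Metric.infDist θ' (argmaxSet h lam x c' r') with hτdef
  have hτ0 : 0 ≤ τs := Metric.infDist_nonneg
  have hkey : γ * τs ^ p ≤ 2 * L * Δ :=
    le_trans (growth_unpack hgrow' hx hθ'm hτ0 le_rfl) hgap
  have hτle : τs ≤ (2 * L * Δ / γ) ^ (1 / p) := by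
    apply rpow_le_of_pow_le hτ0 hp
    rw [le_div_iff₀ hγ]; linarith [hkey]
  obtain ⟨θh, hθh, hdist⟩ :=
    argmax_isCompact.exists_infDist_eq_dist (argmax_nonempty hc' hr') θ'
  refine ⟨θh, hθh, ?_⟩
  calc ‖θs - θh‖ ≤ ‖θs - θ'‖ + ‖θ' - θh‖ := norm_sub_le_norm_sub_add_norm_sub _ _ _
  _ ≤ Δ + (2 * L * Δ / γ) ^ (1 / p) := by
      rw [← dist_eq_norm θ' θh, ← hdist]
      exact add_le_add hθθ' hτle
  _ = _ := rfl

end BDRVI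

namespace BDRVI

variable {n d : ℕ}

lemma normalCone_zero_mem {X : Set (Fin d → ℝ)} {x : Fin d → ℝ} :
    (0 : Fin d → ℝ) ∈ normalCone X x := fun y _ => by simp

lemma resid_set_nonempty {G : Fin n → (Fin d → ℝ) → Fin d → ℝ} {X : Set (Fin d → ℝ)}
    {x : Fin d → ℝ} {θ : Fin n → ℝ} :
    ((fun w => (fun i => ∑ j, θ j * G j x i) + w) '' normalCone X x).Nonempty :=
  ⟨_, 0, normalCone_zero_mem, rfl⟩

lemma resid_nonneg {G : Fin n → (Fin d → ℝ) → Fin d → ℝ} {X : Set (Fin d → ℝ)}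
    {x : Fin d → ℝ} {θ : Fin n → ℝ} : 0 ≤ resid G X x θ := Metric.infDist_nonneg

lemma resid_eq_zero_of_VI {G : Fin n → (Fin d → ℝ) → Fin d → ℝ} {X : Set (Fin d → ℝ)}
    {x : Fin d → ℝ} {θ : Fin n → ℝ}
    (hVI : ∀ y ∈ X, 0 ≤ ∑ i, (∑ j, θ j * G j x i) * (y i - x i)) :
    resid G X x θ = 0 := by
  set F : Fin d → ℝ := fun i => ∑ j, θ j * G j x i with hF
  have hv : -F ∈ normalCone X x := by
    intro y hy
    have : ∑ i, (-F) i * (y i - x i) = -∑ i, F i * (y i - x i) := by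
      rw [← Finset.sum_neg_distrib]
      exact Finset.sum_congr rfl fun i _ => by simp [neg_mul]
    rw [this]
    simpa using hVI y hy
  have h0 : (0 : Fin d → ℝ) ∈ (fun w => F + w) '' normalCone X x :=
    ⟨-F, hv, by funext i; simp⟩
  refine le_antisymm ?_ resid_nonneg
  calc resid G X x θ ≤ dist (0 : Fin d → ℝ) 0 := Metric.infDist_le_dist_of_mem h0
  _ = 0 := dist_self _

lemma infDist_le_infDist_add' {α : Type*} [PseudoMetricSpace α] {z : α} {S T : Set α}
    (hT : T.Nonempty) {cst : ℝ} (H : ∀ t ∈ T, ∃ s ∈ S, dist z s ≤ dist z t + cst) :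
    Metric.infDist z S ≤ Metric.infDist z T + cst := by
  by_contra hlt
  push_neg at hlt
  obtain ⟨t, ht, hd⟩ := (Metric.infDist_lt_iff hT).1 (by linarith : Metric.infDist z T < Metric.infDist z S - cst)
  obtain ⟨s, hs, hds⟩ := H t ht
  have := Metric.infDist_le_dist_of_mem (x := z) hs
  linarith

lemma F_diff_bound {G : Fin n → (Fin d → ℝ) → Fin d → ℝ} {X : Set (Fin d → ℝ)} {M : ℝ}
    (hMG : ∀ j, ∀ x ∈ X, ∀ i, |G j x i| ≤ M) (hM0 : 0 ≤ M)
    {x : Fin d → ℝ} (hx : x ∈ X) (θ θ' : Fin n → ℝ) :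
    ‖(fun i => ∑ j, θ j * G j x i) - (fun i => ∑ j, θ' j * G j x i)‖
      ≤ (n * M) * ‖θ - θ'‖ := by
  rw [pi_norm_le_iff_of_nonneg (by positivity)]
  intro i
  have : (fun i => ∑ j, θ j * G j x i) i - (fun i => ∑ j, θ' j * G j x i) i
      = ∑ j, (θ j - θ' j) * G j x i := by
    simp only [← Finset.sum_sub_distrib]
    exact Finset.sum_congr rfl fun j _ => by ring
  rw [Pi.sub_apply, this, Real.norm_eq_abs]
  calc |∑ j, (θ j - θ' j) * G j x i| ≤ ∑ j, |(θ j - θ' j) * G j x i| :=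
      Finset.abs_sum_le_sum_abs _ _
  _ ≤ ∑ _j : Fin n, ‖θ - θ'‖ * M := by
      apply Finset.sum_le_sum; intro j _
      rw [abs_mul]
      exact mul_le_mul (comp_abs_le_norm (θ - θ') j |>.trans_eq (by simp)) (hMG j x hx i)
        (abs_nonneg _) (norm_nonneg _)
  _ = (n * M) * ‖θ - θ'‖ := by rw [Finset.sum_const]; simp [Finset.card_univ]; ring

lemma resid_le_resid_add {G : Fin n → (Fin d → ℝ) → Fin d → ℝ} {X : Set (Fin d → ℝ)} {M : ℝ}
    (hMG : ∀ j, ∀ x ∈ X, ∀ i, |G j x i| ≤ M) (hM0 : 0 ≤ M)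
    {x : Fin d → ℝ} (hx : x ∈ X) (θ θ' : Fin n → ℝ) :
    resid G X x θ ≤ resid G X x θ' + (n * M) * ‖θ - θ'‖ := by
  set F : Fin d → ℝ := fun i => ∑ j, θ j * G j x i with hF
  set F' : Fin d → ℝ := fun i => ∑ j, θ' j * G j x i with hF'
  apply infDist_le_infDist_add' resid_set_nonempty
  rintro t ⟨w, hw, rfl⟩
  refine ⟨F + w, ⟨w, hw, rfl⟩, ?_⟩
  simp only [dist_zero_left]
  calc ‖F + w‖ = ‖(F' + w) + (F - F')‖ := by congr 1; abel
  _ ≤ ‖F' + w‖ + ‖F - F'‖ := norm_add_le _ _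
  _ ≤ ‖F' + w‖ + (n * M) * ‖θ - θ'‖ := by
      have := F_diff_bound hMG hM0 hx θ θ'
      linarith [this]

lemma rpow_one_div_rpow {a p : ℝ} (ha : 0 ≤ a) (hp0 : p ≠ 0) : (a ^ p) ^ (1 / p) = a := by
  rw [← Real.rpow_mul ha, mul_one_div_cancel hp0, Real.rpow_one]

lemma solset_dev {X : Set (Fin d → ℝ)} {G : Fin n → (Fin d → ℝ) → Fin d → ℝ}
    {h : Fin n → (Fin d → ℝ) → ℝ} {lam M γ p γbar pbar τ0 : ℝ} {c c' : Fin n → ℝ} {r r' : ℝ}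
    (hM : ∀ j, ∀ x ∈ X, |h j x| ≤ M) (hM0 : 0 ≤ M)
    (hMG : ∀ j, ∀ x ∈ X, ∀ i, |G j x i| ≤ M) (hlam : 0 ≤ lam)
    (hp : 1 ≤ p) (hγ : 0 < γ) (hpbar : 1 ≤ pbar) (hγbar : 0 < γbar) (hτ0 : 0 < τ0)
    (hc : c ∈ simplex n) (hc' : c' ∈ simplex n) (hr : 0 ≤ r) (hr' : 0 ≤ r')
    (hgrow' : ∀ x ∈ X, ∀ τ : ℝ, 0 ≤ τ →
      ENNReal.ofReal (γ * τ ^ p) ≤ psiLow h lam x c' r' τ)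
    (hb' : ∀ τ ∈ Set.Icc (0 : ℝ) τ0,
      ENNReal.ofReal (γbar * τ ^ pbar) ≤ psiSol G h lam X c' r' τ)
    (hsmall : n * M * ((‖c - c'‖ + |r - r'|)
        + (2 * (n * M + 2 * lam) * (‖c - c'‖ + |r - r'|) / γ) ^ (1 / p))
      < γbar * τ0 ^ pbar) :
    ∀ x' ∈ solSet G h lam X c r,
      Metric.infDist x' (solSet G h lam X c' r')
        ≤ (n * M * ((‖c - c'‖ + |r - r'|)
            + (2 * (n * M + 2 * lam) * (‖c - c'‖ + |r - r'|) / γ) ^ (1 / p)) / γbar)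
          ^ (1 / pbar) := by
  set Δ := ‖c - c'‖ + |r - r'| with hΔdef
  have hΔ0 : 0 ≤ Δ := add_nonneg (norm_nonneg _) (abs_nonneg _)
  have hσ0 : 0 ≤ (2 * (n * M + 2 * lam) * Δ / γ) ^ (1 / p) :=
    Real.rpow_nonneg (by positivity) _
  set ρ := n * M * (Δ + (2 * (n * M + 2 * lam) * Δ / γ) ^ (1 / p)) with hρdef
  have hρ0 : 0 ≤ ρ := by
    apply mul_nonneg (by positivity) (by linarith)
  set η := (ρ / γbar) ^ (1 / pbar) with hηdef
  have hη0 : 0 ≤ η := Real.rpow_nonneg (by positivity) _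
  have hηlt : η < τ0 := by
    have h1 : ρ / γbar < τ0 ^ pbar := by rw [div_lt_iff₀ hγbar]; linarith [hsmall]
    calc η < (τ0 ^ pbar) ^ (1 / pbar) :=
        Real.rpow_lt_rpow (by positivity) h1 (by positivity)
    _ = τ0 := rpow_one_div_rpow (le_of_lt hτ0) (by positivity)
  intro x' hx'
  obtain ⟨hx'X, θs, hθs, hVI⟩ := hx'
  obtain ⟨θh, hθh, hdist⟩ := argmax_transfer hM hM0 hlam hp hγ hc hc' hr hr' hgrow' hx'X hθs
  have hresθs : resid G X x' θs = 0 := resid_eq_zero_of_VI hVI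
  have hres : resid G X x' θh ≤ ρ := by
    calc resid G X x' θh ≤ resid G X x' θs + (n * M) * ‖θh - θs‖ :=
        resid_le_resid_add hMG hM0 hx'X θh θs
    _ = (n * M) * ‖θs - θh‖ := by rw [hresθs, norm_sub_rev]; ring
    _ ≤ ρ := by
        rw [hρdef]
        exact mul_le_mul_of_nonneg_left hdist (by positivity)
  by_contra hgt
  push_neg at hgt
  set I := Metric.infDist x' (solSet G h lam X c' r') with hIdef
  set τ'' := min τ0 I with hτ''def
  have hτ''0 : 0 ≤ τ'' := le_min (le_of_lt hτ0) Metric.infDist_nonneg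
  have hητ'' : η < τ'' := lt_min hηlt hgt
  have hfeas : x' ∈ {x ∈ X | τ'' ≤ Metric.infDist x (solSet G h lam X c' r')} :=
    ⟨hx'X, min_le_right _ _⟩
  have hle : psiSol G h lam X c' r' τ'' ≤ ENNReal.ofReal (resid G X x' θh) := by
    calc psiSol G h lam X c' r' τ''
        ≤ ⨅ θ ∈ argmaxSet h lam x' c' r', ENNReal.ofReal (resid G X x' θ) :=
        iInf₂_le x' hfeas
    _ ≤ ENNReal.ofReal (resid G X x' θh) := iInf₂_le θh hθh
  have hgb := (hb' τ'' ⟨hτ''0, min_le_left _ _⟩).trans (hle.trans (ENNReal.ofReal_le_ofReal hres))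
  rw [ENNReal.ofReal_le_ofReal_iff hρ0] at hgb
  have : τ'' ≤ η := by
    rw [hηdef]
    exact rpow_le_of_pow_le hτ''0 hpbar (by rw [le_div_iff₀ hγbar]; linarith)
  linarith

end BDRVI

namespace BDRVI

variable {n d : ℕ}

section Limits

variable {X : Set (Fin d → ℝ)} {G : Fin n → (Fin d → ℝ) → Fin d → ℝ}
  {h : Fin n → (Fin d → ℝ) → ℝ} {lam M Kh KG : ℝ} {θc : Fin n → ℝ} {rc : ℝ}
  {c : ℕ → Fin n → ℝ} {r : ℕ → ℝ} {U : Ultrafilter ℕ}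

lemma norm_tendsto_zero {E : Type*} [NormedAddCommGroup E] {f : ℕ → E} {a : E}
    (hf : Tendsto f ↑U (𝓝 a)) : Tendsto (fun k => ‖f k - a‖) ↑U (𝓝 0) := by
  have := (hf.sub (tendsto_const_nhds (x := a))).norm
  simpa using this

lemma argmax_limit
    (hM : ∀ j, ∀ x ∈ X, |h j x| ≤ M) (hM0 : 0 ≤ M) (hlam : 0 ≤ lam)
    (hKh : ∀ j, ∀ x ∈ X, ∀ y ∈ X, |h j x - h j y| ≤ Kh * ‖x - y‖) (hKh0 : 0 ≤ Kh)
    (hθc : θc ∈ simplex n) (hrc : 0 ≤ rc)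
    (hc : ∀ k, c k ∈ simplex n) (hr : ∀ k, 0 ≤ r k)
    (hcconv : Tendsto c atTop (𝓝 θc)) (hrconv : Tendsto r atTop (𝓝 rc))
    (hU : ↑U ≤ (atTop : Filter ℕ))
    {x : ℕ → Fin d → ℝ} (hx : ∀ k, x k ∈ X) {xb : Fin d → ℝ}
    (hxb : Tendsto x ↑U (𝓝 xb)) (hxbX : xb ∈ X)
    {ϑ : ℕ → Fin n → ℝ} (hϑ : ∀ k, ϑ k ∈ argmaxSet h lam (x k) (c k) (r k))
    {θb : Fin n → ℝ} (hθb : Tendsto ϑ ↑U (𝓝 θb)) :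
    θb ∈ argmaxSet h lam xb θc rc := by
  have hϑs : ∀ k, ϑ k ∈ simplex n := fun k => amb_subset_simplex (hϑ k).1
  have hθbs : θb ∈ simplex n :=
    simplex_isClosed.mem_of_tendsto hθb (Eventually.of_forall hϑs)
  have hθbn : ‖θb - θc‖ ≤ rc := by
    refine le_of_tendsto_of_tendsto' ((hθb.sub (hcconv.mono_left hU)).norm)
      (hrconv.mono_left hU) (fun k => ?_)
    exact (hϑ k).1.1
  have hθbamb : θb ∈ amb θc rc := ⟨hθbn, hθbs⟩
  set L : ℝ := n * M + 2 * lam with hLdef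
  have hL0 : 0 ≤ L := by rw [hLdef]; positivity
  -- obj tendsto
  have hobjtend : Tendsto (fun k => obj h lam (x k) (ϑ k)) ↑U (𝓝 (obj h lam xb θb)) := by
    rw [tendsto_iff_dist_tendsto_zero]
    apply squeeze_zero (fun k => dist_nonneg)
      (g := fun k => L * ‖ϑ k - θb‖ + Kh * ‖x k - xb‖)
    · intro k
      rw [Real.dist_eq]
      calc |obj h lam (x k) (ϑ k) - obj h lam xb θb|
          ≤ |obj h lam (x k) (ϑ k) - obj h lam (x k) θb|
            + |obj h lam (x k) θb - obj h lam xb θb| := abs_sub_le _ _ _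
      _ ≤ L * ‖ϑ k - θb‖ + Kh * ‖x k - xb‖ :=
          add_le_add (obj_lip_theta hM hlam (hx k) (hϑs k) hθbs)
            (obj_lip_x hKh hKh0 (hx k) hxbX hθbs)
    · have h1 : Tendsto (fun k => ‖ϑ k - θb‖) ↑U (𝓝 0) := norm_tendsto_zero hθb
      have h2 : Tendsto (fun k => ‖x k - xb‖) ↑U (𝓝 0) := norm_tendsto_zero hxb
      have := (h1.const_mul L).add (h2.const_mul Kh)
      simpa using this
  refine ⟨hθbamb, le_antisymm (obj_le_nuval hθbamb) ?_⟩
  -- lower bound: nuval xb θc rc ≤ obj xb θb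
  have hlow : ∀ k, nuval h lam xb θc rc ≤ obj h lam (x k) (ϑ k)
      + (Kh * ‖xb - x k‖ + L * (‖θc - c k‖ + |rc - r k|)) := by
    intro k
    have := nuval_le hM hM0 hlam hKh hKh0 hxbX (hx k) hθc (hc k) hrc (hr k)
    rw [← (hϑ k).2] at this
    rw [hLdef]
    linarith
  have herr : Tendsto (fun k => obj h lam (x k) (ϑ k)
      + (Kh * ‖xb - x k‖ + L * (‖θc - c k‖ + |rc - r k|))) ↑U (𝓝 (obj h lam xb θb)) := by
    have e1 : Tendsto (fun k => ‖xb - x k‖) ↑U (𝓝 0) := by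
      have := norm_tendsto_zero hxb
      simpa [norm_sub_rev] using this
    have e2 : Tendsto (fun k => ‖θc - c k‖) ↑U (𝓝 0) := by
      have := norm_tendsto_zero (hcconv.mono_left hU)
      simpa [norm_sub_rev] using this
    have e3 : Tendsto (fun k => |rc - r k|) ↑U (𝓝 0) := by
      have := norm_tendsto_zero (hrconv.mono_left hU)
      simpa [norm_sub_rev, Real.norm_eq_abs, abs_sub_comm] using this
    have := hobjtend.add (((e1.const_mul Kh)).add (((e2.add e3).const_mul L)))
    simpa using this
  exact le_of_tendsto_of_tendsto' tendsto_const_nhds herr hlow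

lemma F_x_diff_bound
    (hKG : ∀ j, ∀ x ∈ X, ∀ y ∈ X, ‖G j x - G j y‖ ≤ KG * ‖x - y‖) (hKG0 : 0 ≤ KG)
    {x y : Fin d → ℝ} (hx : x ∈ X) (hy : y ∈ X) {θ : Fin n → ℝ} (hθ : θ ∈ simplex n) :
    ‖(fun i => ∑ j, θ j * G j x i) - (fun i => ∑ j, θ j * G j y i)‖ ≤ KG * ‖x - y‖ := by
  rw [pi_norm_le_iff_of_nonneg (by positivity)]
  intro i
  have e : (fun i => ∑ j, θ j * G j x i) i - (fun i => ∑ j, θ j * G j y i) i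
      = ∑ j, θ j * (G j x i - G j y i) := by
    simp only [← Finset.sum_sub_distrib]
    exact Finset.sum_congr rfl fun j _ => by ring
  rw [Pi.sub_apply, e, Real.norm_eq_abs]
  calc |∑ j, θ j * (G j x i - G j y i)| ≤ ∑ j, |θ j * (G j x i - G j y i)| :=
      Finset.abs_sum_le_sum_abs _ _
  _ ≤ ∑ j, θ j * (KG * ‖x - y‖) := by
      apply Finset.sum_le_sum; intro j _
      rw [abs_mul, abs_of_nonneg (hθ.2 j)]
      apply mul_le_mul_of_nonneg_left _ (hθ.2 j)
      calc |G j x i - G j y i| = |(G j x - G j y) i| := by simp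
      _ ≤ ‖G j x - G j y‖ := comp_abs_le_norm _ i
      _ ≤ KG * ‖x - y‖ := hKG j x hx y hy
  _ = KG * ‖x - y‖ := by rw [← Finset.sum_mul, hθ.1, one_mul]

lemma F_norm_bound {M : ℝ} (hMG : ∀ j, ∀ x ∈ X, ∀ i, |G j x i| ≤ M)
    {x : Fin d → ℝ} (hx : x ∈ X) {θ : Fin n → ℝ} (hθ : θ ∈ simplex n) (hM0 : 0 ≤ M) :
    ‖(fun i => ∑ j, θ j * G j x i : Fin d → ℝ)‖ ≤ M := by
  rw [pi_norm_le_iff_of_nonneg hM0]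
  intro i
  rw [Real.norm_eq_abs]
  calc |∑ j, θ j * G j x i| ≤ ∑ j, |θ j * G j x i| := Finset.abs_sum_le_sum_abs _ _
  _ ≤ ∑ j, θ j * M := by
      apply Finset.sum_le_sum; intro j _
      rw [abs_mul, abs_of_nonneg (hθ.2 j)]
      exact mul_le_mul_of_nonneg_left (hMG j x hx i) (hθ.2 j)
  _ = M := by rw [← Finset.sum_mul, hθ.1, one_mul]

lemma F_tendsto
    (hMG : ∀ j, ∀ x ∈ X, ∀ i, |G j x i| ≤ M) (hM0 : 0 ≤ M)
    (hKG : ∀ j, ∀ x ∈ X, ∀ y ∈ X, ‖G j x - G j y‖ ≤ KG * ‖x - y‖) (hKG0 : 0 ≤ KG)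
    {x : ℕ → Fin d → ℝ} (hx : ∀ k, x k ∈ X) {xb : Fin d → ℝ}
    (hxb : Tendsto x ↑U (𝓝 xb)) (hxbX : xb ∈ X)
    {ϑ : ℕ → Fin n → ℝ} (hϑs : ∀ k, ϑ k ∈ simplex n)
    {θb : Fin n → ℝ} (hθb : Tendsto ϑ ↑U (𝓝 θb)) (hθbs : θb ∈ simplex n) :
    Tendsto (fun k => (fun i => ∑ j, ϑ k j * G j (x k) i : Fin d → ℝ)) ↑U
      (𝓝 (fun i => ∑ j, θb j * G j xb i)) := by
  rw [tendsto_iff_norm_sub_tendsto_zero]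
  apply squeeze_zero (fun k => norm_nonneg _)
    (g := fun k => (n * M) * ‖ϑ k - θb‖ + KG * ‖x k - xb‖)
  · intro k
    calc ‖(fun i => ∑ j, ϑ k j * G j (x k) i : Fin d → ℝ) - fun i => ∑ j, θb j * G j xb i‖
        ≤ ‖(fun i => ∑ j, ϑ k j * G j (x k) i : Fin d → ℝ) - fun i => ∑ j, θb j * G j (x k) i‖
          + ‖(fun i => ∑ j, θb j * G j (x k) i : Fin d → ℝ) - fun i => ∑ j, θb j * G j xb i‖ :=
        norm_sub_le_norm_sub_add_norm_sub _ _ _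
    _ ≤ (n * M) * ‖ϑ k - θb‖ + KG * ‖x k - xb‖ :=
        add_le_add (F_diff_bound hMG hM0 (hx k) (ϑ k) θb)
          (F_x_diff_bound hKG hKG0 (hx k) hxbX hθbs)
  · have h1 : Tendsto (fun k => ‖ϑ k - θb‖) ↑U (𝓝 0) := norm_tendsto_zero hθb
    have h2 : Tendsto (fun k => ‖x k - xb‖) ↑U (𝓝 0) := norm_tendsto_zero hxb
    have := (h1.const_mul ((n : ℝ) * M)).add (h2.const_mul KG)
    simpa using this

lemma resid_lsc
    (hMG : ∀ j, ∀ x ∈ X, ∀ i, |G j x i| ≤ M) (hM0 : 0 ≤ M)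
    (hKG : ∀ j, ∀ x ∈ X, ∀ y ∈ X, ‖G j x - G j y‖ ≤ KG * ‖x - y‖) (hKG0 : 0 ≤ KG)
    (hU : ↑U ≤ (atTop : Filter ℕ))
    {x : ℕ → Fin d → ℝ} (hx : ∀ k, x k ∈ X) {xb : Fin d → ℝ}
    (hxb : Tendsto x ↑U (𝓝 xb)) (hxbX : xb ∈ X)
    {ϑ : ℕ → Fin n → ℝ} (hϑs : ∀ k, ϑ k ∈ simplex n)
    {θb : Fin n → ℝ} (hθb : Tendsto ϑ ↑U (𝓝 θb)) (hθbs : θb ∈ simplex n)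
    {ρs : ℕ → ℝ} (hres : ∀ k, resid G X (x k) (ϑ k) ≤ ρs k)
    {ρb : ℝ} (hρ : Tendsto ρs ↑U (𝓝 ρb)) :
    resid G X xb θb ≤ ρb := by
  set F : ℕ → Fin d → ℝ := fun k => (fun i => ∑ j, ϑ k j * G j (x k) i) with hFdef
  set Fb : Fin d → ℝ := fun i => ∑ j, θb j * G j xb i with hFbdef
  have hFtend : Tendsto F ↑U (𝓝 Fb) :=
    F_tendsto hMG hM0 hKG hKG0 hx hxb hxbX hϑs hθb hθbs
  have Hk : ∀ k, ∃ w ∈ normalCone X (x k), ‖F k + w‖ < ρs k + 1 / (k + 1) := by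
    intro k
    have hlt : resid G X (x k) (ϑ k) < ρs k + 1 / (k + 1) := by
      have : (0:ℝ) < 1 / (k + 1) := by positivity
      linarith [hres k]
    obtain ⟨y, hy, hdy⟩ := (Metric.infDist_lt_iff resid_set_nonempty).1 hlt
    obtain ⟨w, hw, rfl⟩ := hy
    exact ⟨w, hw, by simpa [dist_zero_left] using hdy⟩
  choose w hw hwlt using Hk
  -- w is eventually bounded
  have hwev : ∀ᶠ k in ↑U, w k ∈ Metric.closedBall (0 : Fin d → ℝ) (|ρb| + 1 + 1 + M) := by
    have hev : ∀ᶠ k in ↑U, ρs k < |ρb| + 1 :=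
      hρ.eventually_lt_const (by cases abs_cases ρb with
        | inl hc => rw [hc.1]; linarith
        | inr hc => linarith [hc.1, abs_nonneg ρb])
    filter_upwards [hev] with k hk
    rw [Metric.mem_closedBall, dist_zero_right]
    have h1 : ‖F k‖ ≤ M := F_norm_bound hMG (hx k) (hϑs k) hM0
    have h2 : ‖w k‖ ≤ ‖F k + w k‖ + ‖F k‖ := by
      calc ‖w k‖ = ‖(F k + w k) - F k‖ := by congr 1; abel
      _ ≤ ‖F k + w k‖ + ‖F k‖ := norm_sub_le _ _
    have h3 : (1:ℝ) / (k + 1) ≤ 1 := by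
      rw [div_le_one (by positivity)]; linarith [Nat.cast_nonneg (α := ℝ) k]
    have := hwlt k
    linarith
  obtain ⟨vb, hvbmem, hvble⟩ := (isCompact_closedBall (0 : Fin d → ℝ) _).ultrafilter_le_nhds
    (U.map w) (by rwa [Ultrafilter.coe_map, Filter.le_principal_iff, Filter.mem_map])
  have hwtend : Tendsto w ↑U (𝓝 vb) := by rwa [Ultrafilter.coe_map] at hvble
  have hvbN : vb ∈ normalCone X xb := by
    intro y hy
    have hlim : Tendsto (fun k => ∑ i, w k i * (y i - x k i)) ↑U
        (𝓝 (∑ i, vb i * (y i - xb i))) := by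
      apply tendsto_finset_sum
      intro i _
      exact (tendsto_pi_nhds.1 hwtend i).mul
        (tendsto_const_nhds.sub (tendsto_pi_nhds.1 hxb i))
    exact le_of_tendsto hlim (Eventually.of_forall fun k => hw k y hy)
  have hmem : Fb + vb ∈ (fun w => (fun i => ∑ j, θb j * G j xb i) + w) '' normalCone X xb :=
    ⟨vb, hvbN, rfl⟩
  calc resid G X xb θb ≤ dist (0 : Fin d → ℝ) (Fb + vb) := Metric.infDist_le_dist_of_mem hmem
  _ = ‖Fb + vb‖ := by rw [dist_zero_left]
  _ ≤ ρb := by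
      have hnt : Tendsto (fun k => ‖F k + w k‖) ↑U (𝓝 ‖Fb + vb‖) := (hFtend.add hwtend).norm
      have hgt : Tendsto (fun k => ρs k + 1 / ((k : ℝ) + 1)) ↑U (𝓝 (ρb + 0)) :=
        hρ.add (tendsto_one_div_add_atTop_nhds_zero_nat.mono_left hU)
      have := le_of_tendsto_of_tendsto' hnt hgt (fun k => le_of_lt (hwlt k))
      simpa using this

end Limits

end BDRVI

namespace BDRVI

variable {n d : ℕ}

section Key

variable {X : Set (Fin d → ℝ)} {G : Fin n → (Fin d → ℝ) → Fin d → ℝ}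
  {h : Fin n → (Fin d → ℝ) → ℝ} {lam M Kh KG : ℝ} {θc : Fin n → ℝ} {rc : ℝ}
  {c : ℕ → Fin n → ℝ} {r : ℕ → ℝ}

lemma sol_closed (hXcomp : IsCompact X)
    (hM : ∀ j, ∀ x ∈ X, |h j x| ≤ M) (hM0 : 0 ≤ M)
    (hMG : ∀ j, ∀ x ∈ X, ∀ i, |G j x i| ≤ M) (hlam : 0 ≤ lam)
    (hKh : ∀ j, ∀ x ∈ X, ∀ y ∈ X, |h j x - h j y| ≤ Kh * ‖x - y‖) (hKh0 : 0 ≤ Kh)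
    (hKG : ∀ j, ∀ x ∈ X, ∀ y ∈ X, ‖G j x - G j y‖ ≤ KG * ‖x - y‖) (hKG0 : 0 ≤ KG)
    (hθc : θc ∈ simplex n) (hrc : 0 ≤ rc)
    (hc : ∀ k, c k ∈ simplex n) (hr : ∀ k, 0 ≤ r k)
    (hcconv : Tendsto c atTop (𝓝 θc)) (hrconv : Tendsto r atTop (𝓝 rc))
    {z : ℕ → Fin d → ℝ} (hz : ∀ k, z k ∈ solSet G h lam X (c k) (r k)) :
    (solSet G h lam X θc rc).Nonempty := by
  have hzX : ∀ k, z k ∈ X := fun k => (hz k).1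
  have hzw : ∀ k, ∃ θ ∈ argmaxSet h lam (z k) (c k) (r k),
      ∀ y ∈ X, 0 ≤ ∑ i, (∑ j, θ j * G j (z k) i) * (y i - z k i) := fun k => (hz k).2
  choose ϑ hϑ hVI using hzw
  have hϑs : ∀ k, ϑ k ∈ simplex n := fun k => amb_subset_simplex (hϑ k).1
  set U : Ultrafilter ℕ := Ultrafilter.of atTop with hUdef
  have hU : ↑U ≤ (atTop : Filter ℕ) := Ultrafilter.of_le _
  obtain ⟨xb, hxbX, hle⟩ := hXcomp.ultrafilter_le_nhds (U.map z)
    (by rw [Ultrafilter.coe_map, le_principal_iff, mem_map]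
        exact Eventually.of_forall hzX)
  have hztend : Tendsto z ↑U (𝓝 xb) := by rwa [Ultrafilter.coe_map] at hle
  obtain ⟨θb, hθbs, hle2⟩ := simplex_isCompact.ultrafilter_le_nhds (U.map ϑ)
    (by rw [Ultrafilter.coe_map, le_principal_iff, mem_map]
        exact Eventually.of_forall hϑs)
  have hθtend : Tendsto ϑ ↑U (𝓝 θb) := by rwa [Ultrafilter.coe_map] at hle2
  have hθbmem : θb ∈ argmaxSet h lam xb θc rc :=
    argmax_limit hM hM0 hlam hKh hKh0 hθc hrc hc hr hcconv hrconv hU hzX hztend hxbX hϑ hθtend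
  refine ⟨xb, hxbX, θb, hθbmem, ?_⟩
  intro y hy
  have hFt := F_tendsto hMG hM0 hKG hKG0 hzX hztend hxbX hϑs hθtend hθbs
  have hlim : Tendsto (fun k => ∑ i, (∑ j, ϑ k j * G j (z k) i) * (y i - z k i)) ↑U
      (𝓝 (∑ i, (∑ j, θb j * G j xb i) * (y i - xb i))) := by
    apply tendsto_finset_sum
    intro i _
    exact (tendsto_pi_nhds.1 hFt i).mul (tendsto_const_nhds.sub (tendsto_pi_nhds.1 hztend i))
  exact ge_of_tendsto hlim (Eventually.of_forall fun k => hVI k y hy)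

lemma key_accum (hXcomp : IsCompact X)
    (hM : ∀ j, ∀ x ∈ X, |h j x| ≤ M) (hM0 : 0 ≤ M)
    (hMG : ∀ j, ∀ x ∈ X, ∀ i, |G j x i| ≤ M) (hlam : 0 ≤ lam)
    (hKh : ∀ j, ∀ x ∈ X, ∀ y ∈ X, |h j x - h j y| ≤ Kh * ‖x - y‖) (hKh0 : 0 ≤ Kh)
    (hKG : ∀ j, ∀ x ∈ X, ∀ y ∈ X, ‖G j x - G j y‖ ≤ KG * ‖x - y‖) (hKG0 : 0 ≤ KG)
    (hθc : θc ∈ simplex n) (hrc : 0 ≤ rc)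
    (hc : ∀ k, c k ∈ simplex n) (hr : ∀ k, 0 ≤ r k)
    (hcconv : Tendsto c atTop (𝓝 θc)) (hrconv : Tendsto r atTop (𝓝 rc))
    (U : Ultrafilter ℕ) (hU : ↑U ≤ (atTop : Filter ℕ))
    {x ϑ : ℕ → _} {τs ρs η : ℕ → ℝ} {τb ρb : ℝ}
    (hx : ∀ k, x k ∈ X) (hϑ : ∀ k, ϑ k ∈ argmaxSet h lam (x k) (c k) (r k))
    (hfeas : ∀ k, τs k ≤ Metric.infDist (x k) (solSet G h lam X (c k) (r k)))
    (hτpos : ∀ k, 0 < τs k)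
    (hres : ∀ k, resid G X (x k) (ϑ k) ≤ ρs k)
    (hτlim : Tendsto τs ↑U (𝓝 τb)) (hρlim : Tendsto ρs ↑U (𝓝 ρb))
    (hdev : ∀ k, ∀ x' ∈ solSet G h lam X θc rc,
      Metric.infDist x' (solSet G h lam X (c k) (r k)) ≤ η k)
    (hη : Tendsto η atTop (𝓝 0)) :
    ∃ xb ∈ X, ∃ θb ∈ argmaxSet h lam xb θc rc,
      τb ≤ Metric.infDist xb (solSet G h lam X θc rc) ∧ resid G X xb θb ≤ ρb := by
  have hϑs : ∀ k, ϑ k ∈ simplex n := fun k => amb_subset_simplex (hϑ k).1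
  obtain ⟨xb, hxbX, hle⟩ := hXcomp.ultrafilter_le_nhds (U.map x)
    (by rw [Ultrafilter.coe_map, le_principal_iff, mem_map]
        exact Eventually.of_forall hx)
  have hxtend : Tendsto x ↑U (𝓝 xb) := by rwa [Ultrafilter.coe_map] at hle
  obtain ⟨θb, hθbs, hle2⟩ := simplex_isCompact.ultrafilter_le_nhds (U.map ϑ)
    (by rw [Ultrafilter.coe_map, le_principal_iff, mem_map]
        exact Eventually.of_forall hϑs)
  have hθtend : Tendsto ϑ ↑U (𝓝 θb) := by rwa [Ultrafilter.coe_map] at hle2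
  have hθbmem : θb ∈ argmaxSet h lam xb θc rc :=
    argmax_limit hM hM0 hlam hKh hKh0 hθc hrc hc hr hcconv hrconv hU hx hxtend hxbX hϑ hθtend
  have hresb : resid G X xb θb ≤ ρb :=
    resid_lsc hMG hM0 hKG hKG0 hU hx hxtend hxbX hϑs hθtend hθbs hres hρlim
  -- the solution sets along the sequence are nonempty
  have hsolk : ∀ k, (solSet G h lam X (c k) (r k)).Nonempty := by
    intro k
    by_contra hemp
    rw [Set.not_nonempty_iff_eq_empty] at hemp
    have := hfeas k
    rw [hemp, Metric.infDist_empty] at this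
    linarith [hτpos k]
  choose z hzmem using hsolk
  have hsolc : (solSet G h lam X θc rc).Nonempty :=
    sol_closed hXcomp hM hM0 hMG hlam hKh hKh0 hKG hKG0 hθc hrc hc hr hcconv hrconv hzmem
  refine ⟨xb, hxbX, θb, hθbmem, ?_, hresb⟩
  have hptwise : ∀ x' ∈ solSet G h lam X θc rc, τb ≤ dist xb x' := by
    intro x' hx'
    have hk : ∀ k, τs k ≤ η k + dist (x k) x' := by
      intro k
      calc τs k ≤ Metric.infDist (x k) (solSet G h lam X (c k) (r k)) := hfeas k
      _ ≤ Metric.infDist x' (solSet G h lam X (c k) (r k)) + dist (x k) x' :=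
          Metric.infDist_le_infDist_add_dist
      _ ≤ η k + dist (x k) x' := by linarith [hdev k x' hx']
    have hrhs : Tendsto (fun k => η k + dist (x k) x') ↑U (𝓝 (0 + dist xb x')) :=
      (hη.mono_left hU).add (hxtend.dist tendsto_const_nhds)
    have := le_of_tendsto_of_tendsto' hτlim hrhs hk
    simpa using this
  by_contra hlt
  push_neg at hlt
  obtain ⟨x', hx', hdd⟩ := (Metric.infDist_lt_iff hsolc).1 hlt
  linarith [hptwise x' hx']

end Key

end BDRVI

namespace BDRVI

variable {n d : ℕ}

lemma psiSol_lt_iff {X : Set (Fin d → ℝ)} {G : Fin n → (Fin d → ℝ) → Fin d → ℝ}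
    {h : Fin n → (Fin d → ℝ) → ℝ} {lam : ℝ} {c : Fin n → ℝ} {r τ : ℝ} {b : ℝ≥0∞} :
    psiSol G h lam X c r τ < b ↔ ∃ x, (x ∈ X ∧ τ ≤ Metric.infDist x (solSet G h lam X c r)) ∧
      ∃ θ, θ ∈ argmaxSet h lam x c r ∧ ENNReal.ofReal (resid G X x θ) < b := by
  simp only [psiSol, iInf_lt_iff, Set.mem_sep_iff]
  constructor
  · rintro ⟨x, hx, θ, hθ, hlt⟩
    exact ⟨x, hx, θ, hθ, hlt⟩
  · rintro ⟨x, hx, θ, hθ, hlt⟩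
    exact ⟨x, hx, θ, hθ, hlt⟩

end BDRVI

end AuxLemmas

open BDRVI Metric Topology

/-- Lemma 4.9 (deterministic form): lower semicontinuity of the solution-set growth
function and upper semicontinuity of its generalized inverse along converging
parameter sequences. -/

theorem psiSol_liminf {n d : ℕ} (hn : 1 ≤ n) (hd : 1 ≤ d)
    (X : Set (Fin d → ℝ)) (hXne : X.Nonempty) (hXcomp : IsCompact X) (hXconv : Convex ℝ X)
    (G : Fin n → (Fin d → ℝ) → Fin d → ℝ) (h : Fin n → (Fin d → ℝ) → ℝ)
    (hGLip : ∀ j, ∃ LG : ℝ, ∀ x ∈ X, ∀ y ∈ X, ‖G j x - G j y‖ ≤ LG * ‖x - y‖)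
    (hhLip : ∀ j, ∃ Lh : ℝ, ∀ x ∈ X, ∀ y ∈ X, |h j x - h j y| ≤ Lh * ‖x - y‖)
    (M : ℝ) (hM : ∀ j, ∀ x ∈ X, |h j x| ≤ M) (hMG : ∀ j, ∀ x ∈ X, ∀ i, |G j x i| ≤ M)
    (lam : ℝ) (hlam : 0 < lam)
    (θc : Fin n → ℝ) (hθc : θc ∈ simplex n) (rc : ℝ) (hrc : rc ∈ Set.Icc (0 : ℝ) 1)
    (θN : ℕ → Fin n → ℝ) (hθN : ∀ N, θN N ∈ simplex n)
    (rN : ℕ → ℝ) (hrN : ∀ N, rN N ∈ Set.Icc (0 : ℝ) 1)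
    (hθconv : Tendsto θN atTop (nhds θc)) (hrconv : Tendsto rN atTop (nhds rc))
    (p γ : ℝ) (hp : 1 ≤ p) (hγ : 0 < γ)
    (hgrowc : ∀ x ∈ X, ∀ τ : ℝ, 0 ≤ τ →
      ENNReal.ofReal (γ * τ ^ p) ≤ psiLow h lam x θc rc τ)
    (hgrowN : ∀ N : ℕ, ∀ x ∈ X, ∀ τ : ℝ, 0 ≤ τ →
      ENNReal.ofReal (γ * τ ^ p) ≤ psiLow h lam x (θN N) (rN N) τ)
    (hlocal : ∃ ε : ℝ, 0 < ε ∧ ∃ pbar : ℝ, 1 ≤ pbar ∧ ∃ γbar : ℝ, 0 < γbar ∧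
      ∃ τ0 : ℝ, 0 < τ0 ∧
        ∀ θ ∈ simplex n, ∀ r ∈ Set.Icc (0 : ℝ) 1, ‖θ - θc‖ < ε → |r - rc| < ε →
          ∀ τ ∈ Set.Icc (0 : ℝ) τ0,
            ENNReal.ofReal (γbar * τ ^ pbar) ≤ psiSol G h lam X θ r τ) :
    (∀ τ : ℝ, 0 < τ →
      psiSol G h lam X θc rc τ
        ≤ Filter.liminf (fun N => psiSol G h lam X (θN N) (rN N) τ) atTop) ∧
    (∀ t : ℝ, 0 < t →
      Filter.limsup (fun N => psiSolInv G h lam X (θN N) (rN N) t) atTop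
        ≤ psiSolInv G h lam X θc rc t) := by
  classical
  obtain ⟨x₀, hx₀⟩ := hXne
  have hM0 : 0 ≤ M := le_trans (abs_nonneg _) (hM ⟨0, hn⟩ x₀ hx₀)
  obtain ⟨Kh, hKh0, hKh⟩ := exists_uniform_lip (X := X) h (by
    intro j; obtain ⟨L, hL⟩ := hhLip j
    exact ⟨L, fun x hx y hy => by simpa [Real.norm_eq_abs] using hL x hx y hy⟩)
  obtain ⟨KG, hKG0, hKG⟩ := exists_uniform_lip (X := X) G hGLip
  obtain ⟨ε, hε, pbar, hpbar, γbar, hγbar, τ0, hτ0, hloc⟩ := hlocal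
  have hlam0 : 0 ≤ lam := le_of_lt hlam
  have hrc0 : 0 ≤ rc := hrc.1
  have hrN0 : ∀ N, 0 ≤ rN N := fun N => (hrN N).1
  set Δ : ℕ → ℝ := fun N => ‖θc - θN N‖ + |rc - rN N| with hΔdef
  set ρf : ℕ → ℝ := fun N =>
    ↑n * M * (Δ N + (2 * (↑n * M + 2 * lam) * Δ N / γ) ^ (1 / p)) with hρfdef
  set ηf : ℕ → ℝ := fun N => (ρf N / γbar) ^ (1 / pbar) with hηfdef
  -- convergence of error sequences
  have ht1 : Tendsto (fun N => ‖θc - θN N‖) atTop (𝓝 0) := by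
    have := (tendsto_const_nhds (x := θc)).sub hθconv
    simpa using this.norm
  have ht2 : Tendsto (fun N => |rc - rN N|) atTop (𝓝 0) := by
    have := ((tendsto_const_nhds (x := rc)).sub hrconv).norm
    simpa [Real.norm_eq_abs] using this
  have hΔconv : Tendsto Δ atTop (𝓝 0) := by
    have := ht1.add ht2
    simpa using this
  have hρconv : Tendsto ρf atTop (𝓝 0) := by
    rw [hρfdef]
    have hinner : Tendsto (fun N => 2 * (↑n * M + 2 * lam) * Δ N / γ) atTop (𝓝 0) := by
      have := (hΔconv.const_mul (2 * (↑n * M + 2 * lam))).div_const γ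
      simpa using this
    have hrpow : Tendsto (fun N => (2 * (↑n * M + 2 * lam) * Δ N / γ) ^ (1 / p)) atTop
        (𝓝 0) := by
      have hcont := (Real.continuousAt_rpow_const 0 (1 / p)
        (Or.inr (by positivity))).tendsto
      have := hcont.comp hinner
      have h0 : (0:ℝ) ^ p⁻¹ = 0 := Real.zero_rpow (by positivity)
      simpa [Function.comp_def, h0] using this
    have := (hΔconv.add hrpow).const_mul ((n : ℝ) * M)
    simpa using this
  have hηconv : Tendsto ηf atTop (𝓝 0) := by
    rw [hηfdef]
    have hinner : Tendsto (fun N => ρf N / γbar) atTop (𝓝 0) := by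
      have := hρconv.div_const γbar
      simpa using this
    have hcont := (Real.continuousAt_rpow_const 0 (1 / pbar)
      (Or.inr (by positivity))).tendsto
    have := hcont.comp hinner
    have h0 : (0:ℝ) ^ pbar⁻¹ = 0 := Real.zero_rpow (by positivity)
    simpa [Function.comp_def, h0] using this
  -- the eventual goodness condition
  set E : ℕ → Prop := fun N => ‖θN N - θc‖ < ε ∧ |rN N - rc| < ε ∧
    ρf N < γbar * τ0 ^ pbar with hEdef
  have hEev : ∀ᶠ N in atTop, E N := by
    have e1 : ∀ᶠ N in atTop, ‖θN N - θc‖ < ε := by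
      have : Tendsto (fun N => ‖θN N - θc‖) atTop (𝓝 0) := by
        have := (hθconv.sub (tendsto_const_nhds (x := θc))).norm
        simpa using this
      exact this.eventually_lt_const hε
    have e2 : ∀ᶠ N in atTop, |rN N - rc| < ε := by
      have : Tendsto (fun N => |rN N - rc|) atTop (𝓝 0) := by
        have := (hrconv.sub (tendsto_const_nhds (x := rc))).norm
        simpa [Real.norm_eq_abs] using this
      exact this.eventually_lt_const hε
    have e3 : ∀ᶠ N in atTop, ρf N < γbar * τ0 ^ pbar := by
      have hpos : (0:ℝ) < γbar * τ0 ^ pbar := by positivity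
      exact hρconv.eventually_lt_const hpos
    filter_upwards [e1, e2, e3] with N h1 h2 h3
    exact ⟨h1, h2, h3⟩
  -- the deviation bound under E
  have hdevE : ∀ N, E N → ∀ x' ∈ solSet G h lam X θc rc,
      Metric.infDist x' (solSet G h lam X (θN N) (rN N)) ≤ ηf N := by
    intro N hE x' hx'
    have hbN : ∀ τ ∈ Set.Icc (0:ℝ) τ0,
        ENNReal.ofReal (γbar * τ ^ pbar) ≤ psiSol G h lam X (θN N) (rN N) τ :=
      fun τ hτ => hloc (θN N) (hθN N) (rN N) (hrN N) hE.1 hE.2.1 τ hτ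
    have hsm : ρf N < γbar * τ0 ^ pbar := hE.2.2
    rw [hρfdef] at hsm
    simp only [hΔdef] at hsm
    have := solset_dev hM hM0 hMG hlam0 hp hγ hpbar hγbar hτ0 hθc (hθN N) hrc0 (hrN0 N)
      (hgrowN N) hbN hsm x' hx'
    simp only [hηfdef, hρfdef, hΔdef]
    exact this
  constructor
  · -- Part (i)
    intro τ hτ
    by_cases hA : Filter.liminf (fun N => psiSol G h lam X (θN N) (rN N) τ) atTop = ⊤
    · rw [hA]; exact le_top
    set A := Filter.liminf (fun N => psiSol G h lam X (θN N) (rN N) τ) atTop with hAdef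
    have hfreq : ∀ m : ℕ, ∃ᶠ N in atTop,
        (psiSol G h lam X (θN N) (rN N) τ < A + ENNReal.ofReal (1 / (m + 1)) ∧ E N) := by
      intro m
      have h1 : A < A + ENNReal.ofReal (1 / (m + 1)) :=
        ENNReal.lt_add_right hA (ENNReal.ofReal_pos.2 (by positivity)).ne'
      exact (frequently_lt_of_liminf_lt (h := h1)).and_eventually hEev
    obtain ⟨φ, hφmono, hφ⟩ := Filter.extraction_forall_of_frequently hfreq
    have hwit : ∀ m, ∃ x, (x ∈ X ∧
        τ ≤ Metric.infDist x (solSet G h lam X (θN (φ m)) (rN (φ m)))) ∧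
        ∃ θ, θ ∈ argmaxSet h lam x (θN (φ m)) (rN (φ m)) ∧
          ENNReal.ofReal (resid G X x θ) < A + ENNReal.ofReal (1 / (m + 1)) :=
      fun m => psiSol_lt_iff.1 (hφ m).1
    choose xs hxsS θs hθs hρs using hwit
    have hxsX : ∀ m, xs m ∈ X := fun m => (hxsS m).1
    have hfeas : ∀ m, τ ≤ Metric.infDist (xs m)
        (solSet G h lam X (θN (φ m)) (rN (φ m))) := fun m => (hxsS m).2
    set ρseq : ℕ → ℝ := fun m => A.toReal + 1 / (m + 1) with hρseqdef
    have hresb : ∀ m, resid G X (xs m) (θs m) ≤ ρseq m := by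
      intro m
      have h1 : ENNReal.ofReal (resid G X (xs m) (θs m))
          ≤ A + ENNReal.ofReal (1 / (m + 1)) := le_of_lt (hρs m)
      rw [ENNReal.ofReal_le_iff_le_toReal
        (by exact ENNReal.add_ne_top.2 ⟨hA, ENNReal.ofReal_ne_top⟩)] at h1
      rwa [ENNReal.toReal_add hA ENNReal.ofReal_ne_top,
        ENNReal.toReal_ofReal (by positivity)] at h1
    have hρlim : Tendsto ρseq atTop (𝓝 A.toReal) := by
      rw [hρseqdef]
      have := (tendsto_const_nhds (x := A.toReal)).add
        tendsto_one_div_add_atTop_nhds_zero_nat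
      simpa using this
    set U : Ultrafilter ℕ := Ultrafilter.of atTop with hUdef
    have hU : ↑U ≤ (atTop : Filter ℕ) := Ultrafilter.of_le _
    obtain ⟨xb, hxbX, θb, hθbmem, hinf, hresfin⟩ :=
      key_accum hXcomp hM hM0 hMG hlam0 hKh hKh0 hKG hKG0 hθc hrc0
        (fun m => hθN (φ m)) (fun m => hrN0 (φ m))
        (hθconv.comp hφmono.tendsto_atTop) (hrconv.comp hφmono.tendsto_atTop)
        U hU hxsX hθs hfeas (fun _ => hτ) hresb
        (tendsto_const_nhds.mono_left hU) (hρlim.mono_left hU)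
        (fun m => hdevE (φ m) (hφ m).2) (hηconv.comp hφmono.tendsto_atTop)
    calc psiSol G h lam X θc rc τ
        ≤ ⨅ θ ∈ argmaxSet h lam xb θc rc, ENNReal.ofReal (resid G X xb θ) :=
        iInf₂_le xb ⟨hxbX, hinf⟩
    _ ≤ ENNReal.ofReal (resid G X xb θb) := iInf₂_le θb hθbmem
    _ ≤ ENNReal.ofReal A.toReal := ENNReal.ofReal_le_ofReal hresfin
    _ = A := ENNReal.ofReal_toReal hA
  · -- Part (ii)
    intro t ht
    by_contra hBC
    push_neg at hBC
    obtain ⟨b, hb1, hb2⟩ := exists_between hBC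
    have hbne : b ≠ ⊤ := ne_top_of_lt hb2
    have hb0 : 0 < b := lt_of_le_of_lt zero_le hb1
    set s := b.toReal with hsdef
    have hs0 : 0 < s := ENNReal.toReal_pos (ne_of_gt hb0) hbne
    have hofs : ENNReal.ofReal s = b := ENNReal.ofReal_toReal hbne
    have hfreq : ∃ᶠ N in atTop,
        (b < psiSolInv G h lam X (θN N) (rN N) t ∧ E N) :=
      (frequently_lt_of_lt_limsup (h := hb2)).and_eventually hEev
    obtain ⟨φ, hφmono, hφ⟩ := Filter.extraction_of_frequently_atTop hfreq
    have hwit : ∀ m, ∃ τm : ℝ, (0 ≤ τm ∧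
        psiSol G h lam X (θN (φ m)) (rN (φ m)) τm ≤ ENNReal.ofReal t) ∧
        b < ENNReal.ofReal τm := by
      intro m
      have := (hφ m).1
      rw [psiSolInv, lt_iSup_iff] at this
      obtain ⟨τm, hmem⟩ := this
      rw [lt_iSup_iff] at hmem
      obtain ⟨hm, hlt⟩ := hmem
      exact ⟨τm, hm, hlt⟩
    choose τs hτs hblt using hwit
    have hsτ : ∀ m, s < τs m := by
      intro m
      have := hblt m
      rw [← hofs, ENNReal.ofReal_lt_ofReal_iff_of_nonneg (le_of_lt hs0)] at this
      exact this
    have hτpos : ∀ m, 0 < τs m := fun m => lt_trans hs0 (hsτ m)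
    -- witnesses for the near infimum of psiSol
    have hwit2 : ∀ m, ∃ x, (x ∈ X ∧
        τs m ≤ Metric.infDist x (solSet G h lam X (θN (φ m)) (rN (φ m)))) ∧
        ∃ θ, θ ∈ argmaxSet h lam x (θN (φ m)) (rN (φ m)) ∧
          ENNReal.ofReal (resid G X x θ) < ENNReal.ofReal t + ENNReal.ofReal (1 / (m + 1)) := by
      intro m
      apply psiSol_lt_iff.1
      calc psiSol G h lam X (θN (φ m)) (rN (φ m)) (τs m) ≤ ENNReal.ofReal t := (hτs m).2
      _ < ENNReal.ofReal t + ENNReal.ofReal (1 / (m + 1)) :=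
          ENNReal.lt_add_right ENNReal.ofReal_ne_top
            (ENNReal.ofReal_pos.2 (by positivity)).ne'
    choose xs hxsS θs hθs hρs using hwit2
    have hxsX : ∀ m, xs m ∈ X := fun m => (hxsS m).1
    have hfeas : ∀ m, τs m ≤ Metric.infDist (xs m)
        (solSet G h lam X (θN (φ m)) (rN (φ m))) := fun m => (hxsS m).2
    set ρseq : ℕ → ℝ := fun m => t + 1 / (m + 1) with hρseqdef
    have hresb : ∀ m, resid G X (xs m) (θs m) ≤ ρseq m := by
      intro m
      have h1 := le_of_lt (hρs m)
      rw [ENNReal.ofReal_le_iff_le_toReal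
        (by exact ENNReal.add_ne_top.2 ⟨ENNReal.ofReal_ne_top, ENNReal.ofReal_ne_top⟩)] at h1
      rwa [ENNReal.toReal_add ENNReal.ofReal_ne_top ENNReal.ofReal_ne_top,
        ENNReal.toReal_ofReal (le_of_lt ht), ENNReal.toReal_ofReal (by positivity)] at h1
    have hρlim : Tendsto ρseq atTop (𝓝 t) := by
      rw [hρseqdef]
      have := (tendsto_const_nhds (x := t)).add tendsto_one_div_add_atTop_nhds_zero_nat
      simpa using this
    -- the sequence τs is bounded
    have hsolne : ∀ m, (solSet G h lam X (θN (φ m)) (rN (φ m))).Nonempty := by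
      intro m
      by_contra hemp
      rw [Set.not_nonempty_iff_eq_empty] at hemp
      have := hfeas m
      rw [hemp, Metric.infDist_empty] at this
      linarith [hτpos m]
    have hτbound : ∀ m, τs m ∈ Set.Icc (0:ℝ) (Metric.diam X) := by
      intro m
      obtain ⟨z, hz⟩ := hsolne m
      refine ⟨le_of_lt (hτpos m), ?_⟩
      calc τs m ≤ Metric.infDist (xs m) (solSet G h lam X (θN (φ m)) (rN (φ m))) := hfeas m
      _ ≤ dist (xs m) z := Metric.infDist_le_dist_of_mem hz
      _ ≤ Metric.diam X := Metric.dist_le_diam_of_mem hXcomp.isBounded (hxsX m) (hz.1 : z ∈ X)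
    set U : Ultrafilter ℕ := Ultrafilter.of atTop with hUdef
    have hU : ↑U ≤ (atTop : Filter ℕ) := Ultrafilter.of_le _
    obtain ⟨τb, hτbIcc, hτble⟩ := (isCompact_Icc (a := (0:ℝ)) (b := Metric.diam X)).ultrafilter_le_nhds
      (U.map τs) (by rw [Ultrafilter.coe_map, le_principal_iff, mem_map]
                     exact Eventually.of_forall hτbound)
    have hτtend : Tendsto τs ↑U (𝓝 τb) := by rwa [Ultrafilter.coe_map] at hτble
    have hsτb : s ≤ τb := ge_of_tendsto hτtend (Eventually.of_forall fun m => le_of_lt (hsτ m))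
    obtain ⟨xb, hxbX, θb, hθbmem, hinf, hresfin⟩ :=
      key_accum hXcomp hM hM0 hMG hlam0 hKh hKh0 hKG hKG0 hθc hrc0
        (fun m => hθN (φ m)) (fun m => hrN0 (φ m))
        (hθconv.comp hφmono.tendsto_atTop) (hrconv.comp hφmono.tendsto_atTop)
        U hU hxsX hθs hfeas hτpos hresb
        hτtend (hρlim.mono_left hU)
        (fun m => hdevE (φ m) (hφ m).2) (hηconv.comp hφmono.tendsto_atTop)
    -- s belongs to the admissible set for psiSolInv at (θc, rc)
    have hmem : s ∈ {τ : ℝ | 0 ≤ τ ∧ psiSol G h lam X θc rc τ ≤ ENNReal.ofReal t} := by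
      refine ⟨le_of_lt hs0, ?_⟩
      calc psiSol G h lam X θc rc s
          ≤ ⨅ θ ∈ argmaxSet h lam xb θc rc, ENNReal.ofReal (resid G X xb θ) :=
          iInf₂_le xb ⟨hxbX, le_trans hsτb hinf⟩
      _ ≤ ENNReal.ofReal (resid G X xb θb) := iInf₂_le θb hθbmem
      _ ≤ ENNReal.ofReal t := ENNReal.ofReal_le_ofReal hresfin
    have : ENNReal.ofReal s ≤ psiSolInv G h lam X θc rc t :=
      le_iSup₂ (f := fun (τ : ℝ) (_ : τ ∈ {τ : ℝ | 0 ≤ τ ∧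
        psiSol G h lam X θc rc τ ≤ ENNReal.ofReal t}) => ENNReal.ofReal τ) s hmem
    rw [hofs] at this
    exact absurd (lt_of_le_of_lt this hb1) (lt_irrefl b)
end
end
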